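/- arXiv:1108.2934 — 10 statements merged into one kernel-verified Lean document; each statement's English description precedes it below -/
import Mathlib

section
/- Every pre-adhesive morphism is a regular monomorphism. That is, if m : C ⟶ A is a morphism in a category with pullbacks such that pushouts along m exist, are stable under pullback, and are also pullback squares, then m is a regular monomorphism. -/
open CategoryTheory Limits

universe v u

variable {C : Type u} [Category.{v} C]

/-- A pushout square is stable under pullback: every pullback of the square
along a morphism into the pushout vertex (i.e. a commutative cube over it whose
vertical faces are pullbacks) is again a pushout. -/
def IsStablePushout {W X Y Z : C} {f : W ⟶ X} {g : W ⟶ Y} {h : X ⟶ Z} {i : Y ⟶ Z}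
    (_ : IsPushout f g h i) : Prop :=
  ∀ ⦃W' X' Y' Z' : C⦄ (f' : W' ⟶ X') (g' : W' ⟶ Y') (h' : X' ⟶ Z') (i' : Y' ⟶ Z')
    (αW : W' ⟶ W) (αX : X' ⟶ X) (αY : Y' ⟶ Y) (αZ : Z' ⟶ Z),
    IsPullback f' αW αX f → IsPullback g' αW αY g →
    IsPullback h' αX αZ h → IsPullback i' αY αZ i →
    CommSq f' g' h' i' → IsPushout f' g' h' i'

/-- A morphism `m` is pre-adhesive if pushouts along `m` exist, are stable under
pullback, and are pullback squares. -/
def PreAdhesive {W X : C} (m : W ⟶ X) : Prop :=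
  (∀ {Y : C} (f : W ⟶ Y), HasPushout m f) ∧
  ∀ {Y Z : C} (f : W ⟶ Y) (h : X ⟶ Z) (i : Y ⟶ Z) (H : IsPushout m f h i),
    IsStablePushout H ∧ IsPullback m f h i

/-- A morphism is adhesive if every pullback of it is pre-adhesive. -/
def AdhesiveMorphism {W X : C} (m : W ⟶ X) : Prop :=
  ∀ {W' X' : C} (a : W' ⟶ W) (m' : W' ⟶ X') (b : X' ⟶ X),
    IsPullback a m' m b → PreAdhesive m'

/-- Every pre-adhesive morphism is a regular monomorphism. -/
theorem preAdhesive_regularMono [HasPullbacks C] {X Y : C} (m : X ⟶ Y)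
    (hm : PreAdhesive m) : Nonempty (RegularMono m) := by
  have hp : HasPushout m m := hm.1 m
  have H : IsPushout m m (pushout.inl m m) (pushout.inr m m) := IsPushout.of_hasPushout m m
  have hpb : IsPullback m m (pushout.inl m m) (pushout.inr m m) :=
    (hm.2 m _ _ H).2
  refine ⟨⟨pushout _ _, pushout.inl m m, pushout.inr m m, H.w, ?_⟩⟩
  refine Fork.IsLimit.mk _ (fun s => hpb.lift s.ι s.ι s.condition) ?_ ?_
  · intro s
    exact hpb.lift_fst _ _ _
  · intro s l hl
    apply hpb.hom_ext
    · rw [hpb.lift_fst]; exact hl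
    · rw [hpb.lift_snd]; exact hl
end

section
/- Cancellation lemma for pullbacks over a stable pushout: suppose the square with vertices A₀, A₁, A₂, A (morphisms b₁ : A₀ ⟶ A₁, b₂ : A₀ ⟶ A₂, a₁ : A₁ ⟶ A, a₂ : A₂ ⟶ A) is a pushout that is stable under pullback. Suppose given p : A' ⟶ A, f : A ⟶ B, f' : A' ⟶ B', q : B' ⟶ B with f' ≫ q = p ≫ f, and for i = 1, 2 pullback squares p_i : A'_i ⟶ A_i of p along a_i (with top maps a'_i : A'_i ⟶ A'), such that for each i the composite rectangle (A'_i ⟶ B' over A_i ⟶ A ⟶ B) is a pullback. Then the square with sides p, f', q, f is a pullback. -/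
open CategoryTheory Limits

universe v u

variable {C : Type u} [Category.{v} C]

/-- Cancellation lemma for pullbacks over a stable pushout. -/
theorem cancellation_over_stable_pushout [HasPullbacks C]
    {A₀ A₁ A₂ A A' B B' : C}
    {b₁ : A₀ ⟶ A₁} {b₂ : A₀ ⟶ A₂} {a₁ : A₁ ⟶ A} {a₂ : A₂ ⟶ A}
    (H : IsPushout b₁ b₂ a₁ a₂) (hH : IsStablePushout H)
    (p : A' ⟶ A) (f : A ⟶ B) (f' : A' ⟶ B') (q : B' ⟶ B)
    (w : f' ≫ q = p ≫ f)
    {A'₁ A'₂ : C} (p₁ : A'₁ ⟶ A₁) (p₂ : A'₂ ⟶ A₂)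
    (a'₁ : A'₁ ⟶ A') (a'₂ : A'₂ ⟶ A')
    (h₁ : IsPullback a'₁ p₁ p a₁) (h₂ : IsPullback a'₂ p₂ p a₂)
    (r₁ : IsPullback (a'₁ ≫ f') p₁ q (a₁ ≫ f))
    (r₂ : IsPullback (a'₂ ≫ f') p₂ q (a₂ ≫ f)) :
    IsPullback f' p q f := by
  -- the comparison map into the actual pullback
  let P := pullback q f
  let c : A' ⟶ P := pullback.lift f' p w
  have hcf : c ≫ pullback.fst q f = f' := pullback.lift_fst _ _ _
  have hcp : c ≫ pullback.snd q f = p := pullback.lift_snd _ _ _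
  have hPb : IsPullback (pullback.fst q f) (pullback.snd q f) q f :=
    IsPullback.of_hasPullback q f
  -- A'₀ : pullback of p₁ along b₁
  let A'₀ := pullback p₁ b₁
  let b'₁ : A'₀ ⟶ A'₁ := pullback.fst p₁ b₁
  let p₀ : A'₀ ⟶ A₀ := pullback.snd p₁ b₁
  have s₁ : IsPullback b'₁ p₀ p₁ b₁ := IsPullback.of_hasPullback p₁ b₁
  -- pasted square over b₁ ≫ a₁
  have t₁ : IsPullback (b'₁ ≫ a'₁) p₀ p (b₁ ≫ a₁) := s₁.paste_horiz h₁
  -- construct b'₂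
  have hw₂ : (b'₁ ≫ a'₁) ≫ p = p₀ ≫ b₂ ≫ a₂ := by
    rw [t₁.w, ← H.w]
  let b'₂ : A'₀ ⟶ A'₂ := h₂.lift (b'₁ ≫ a'₁) (p₀ ≫ b₂) (by rw [hw₂, Category.assoc])
  have hb'₂a : b'₂ ≫ a'₂ = b'₁ ≫ a'₁ := h₂.lift_fst _ _ _
  have hb'₂p : b'₂ ≫ p₂ = p₀ ≫ b₂ := h₂.lift_snd _ _ _
  have t₂ : IsPullback (b'₂ ≫ a'₂) p₀ p (b₂ ≫ a₂) := by
    rw [hb'₂a, ← H.w]; exact t₁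
  have s₂ : IsPullback b'₂ p₀ p₂ b₂ := IsPullback.of_right t₂ hb'₂p h₂
  have topComm : CommSq b'₁ b'₂ a'₁ a'₂ := ⟨hb'₂a.symm⟩
  -- first cube: A' is a pushout of the span (b'₁, b'₂)
  have H₁ : IsPushout b'₁ b'₂ a'₁ a'₂ :=
    hH b'₁ b'₂ a'₁ a'₂ p₀ p₁ p₂ p s₁ s₂ h₁ h₂ topComm
  -- the comparison squares over a₁, a₂ into P are pullbacks, by right cancellation
  have u₁ : IsPullback (a'₁ ≫ c) p₁ (pullback.snd q f) a₁ := by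
    refine IsPullback.of_right ?_ (by rw [Category.assoc, hcp]; exact h₁.w) hPb
    rw [Category.assoc, hcf]
    exact r₁
  have u₂ : IsPullback (a'₂ ≫ c) p₂ (pullback.snd q f) a₂ := by
    refine IsPullback.of_right ?_ (by rw [Category.assoc, hcp]; exact h₂.w) hPb
    rw [Category.assoc, hcf]
    exact r₂
  have topComm' : CommSq b'₁ b'₂ (a'₁ ≫ c) (a'₂ ≫ c) := by
    constructor
    rw [← Category.assoc, ← Category.assoc, hb'₂a]
  -- second cube: P is a pushout of the same span
  have H₂ : IsPushout b'₁ b'₂ (a'₁ ≫ c) (a'₂ ≫ c) :=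
    hH b'₁ b'₂ (a'₁ ≫ c) (a'₂ ≫ c) p₀ p₁ p₂ (pullback.snd q f) s₁ s₂ u₁ u₂ topComm'
  -- hence c is an isomorphism
  let d : P ⟶ A' := H₂.desc a'₁ a'₂ H₁.w
  have hd₁ : (a'₁ ≫ c) ≫ d = a'₁ := H₂.inl_desc _ _ _
  have hd₂ : (a'₂ ≫ c) ≫ d = a'₂ := H₂.inr_desc _ _ _
  have hcd : c ≫ d = 𝟙 A' := by
    apply H₁.hom_ext
    · rw [← Category.assoc, hd₁, Category.comp_id]
    · rw [← Category.assoc, hd₂, Category.comp_id]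
  have hdc : d ≫ c = 𝟙 P := by
    apply H₂.hom_ext
    · rw [← Category.assoc, hd₁, Category.comp_id]
    · rw [← Category.assoc, hd₂, Category.comp_id]
  have : IsIso c := ⟨d, hcd, hdc⟩
  exact IsPullback.of_iso_pullback ⟨w⟩ (asIso c) hcf hcp
end

section
/- The class of adhesive morphisms is closed under composition: if m : C ⟶ A and m' : A ⟶ A'' are both adhesive, then m ≫ m' is adhesive. -/
open CategoryTheory Limits

universe v u

variable {C : Type u} [Category.{v} C]

/-- Adhesive morphisms are stable under pullback. -/
lemma adhesive_of_isPullback {W X W' X' : C} {m : W ⟶ X} {a : W' ⟶ W} {n : W' ⟶ X'}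
    {b : X' ⟶ X} (hm : AdhesiveMorphism m) (h : IsPullback a n m b) :
    AdhesiveMorphism n := by
  intro W'' X'' a' n' b' h'
  exact hm (a' ≫ a) n' (b' ≫ b) (h'.paste_horiz h)

/-- An adhesive morphism is pre-adhesive. -/
lemma preAdhesive_of_adhesive {W X : C} {m : W ⟶ X} (hm : AdhesiveMorphism m) :
    PreAdhesive m :=
  hm (𝟙 _) m (𝟙 _) (IsPullback.of_horiz_isIso ⟨by simp⟩)

/-- The composite of two adhesive morphisms is pre-adhesive. -/
lemma preAdhesive_comp [HasPullbacks C] {A B E : C} (j : A ⟶ B) (k : B ⟶ E)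
    (hj : AdhesiveMorphism j) (hk : AdhesiveMorphism k) : PreAdhesive (j ≫ k) := by
  obtain ⟨hjEx, hjStab⟩ := preAdhesive_of_adhesive hj
  obtain ⟨hkEx, hkStab⟩ := preAdhesive_of_adhesive hk
  constructor
  · -- existence of pushouts along `j ≫ k`
    intro D f
    haveI := hjEx f
    haveI := hkEx (pushout.inl j f)
    have po1 := IsPushout.of_hasPushout j f
    have po2 := IsPushout.of_hasPushout k (pushout.inl j f)
    exact (po1.paste_horiz po2).hasPushout
  · intro D Z₀ f h i H
    -- construct the intermediate pushout along `j`
    haveI := hjEx f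
    have po1 : IsPushout j f (pushout.inl j f) (pushout.inr j f) := IsPushout.of_hasPushout j f
    set u : B ⟶ pushout j f := pushout.inl j f with hu
    set v : D ⟶ pushout j f := pushout.inr j f with hv
    have wcomm : j ≫ k ≫ h = f ≫ i := by rw [← Category.assoc]; exact H.w
    set w : pushout j f ⟶ Z₀ := po1.desc (k ≫ h) i wcomm with hw
    have huw : u ≫ w = k ≫ h := po1.inl_desc _ _ _
    have hvw : v ≫ w = i := po1.inr_desc _ _ _
    -- the right square is a pushout
    have H' : IsPushout (j ≫ k) f h (v ≫ w) := by rwa [hvw]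
    have po2 : IsPushout k u h w := IsPushout.of_left H' huw.symm po1
    -- both squares are pullbacks (pre-adhesiveness of `j` and `k`)
    have pbj : IsPullback j f u v := (hjStab f u v po1).2
    have pbk : IsPullback k u h w := (hkStab u h w po2).2
    have stab1 : IsStablePushout po1 := (hjStab f u v po1).1
    have stab2 : IsStablePushout po2 := (hkStab u h w po2).1
    constructor
    · -- stability of the composite pushout
      intro W' X' Y' Z' f₀ g₀ h₀ i₀ αW αX αY αZ pbf pbg pbh pbi sq
      -- pull back the intermediate object B
      have pbB : IsPullback (pullback.fst αX k) (pullback.snd αX k) αX k :=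
        IsPullback.of_hasPullback αX k
      set k' : pullback αX k ⟶ X' := pullback.fst αX k
      set β : pullback αX k ⟶ B := pullback.snd αX k
      have hfjk : f₀ ≫ αX = (αW ≫ j) ≫ k := by rw [Category.assoc]; exact pbf.w
      set j₀ : W' ⟶ pullback αX k := pbB.lift f₀ (αW ≫ j) hfjk with hj₀
      have hj₀k' : j₀ ≫ k' = f₀ := pbB.lift_fst _ _ _
      have hj₀β : j₀ ≫ β = αW ≫ j := pbB.lift_snd _ _ _
      have pbj₀ : IsPullback j₀ αW β j := by
        refine IsPullback.of_right ?_ hj₀β pbB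
        rwa [hj₀k']
      -- pull back the intermediate pushout object P
      have pbP : IsPullback (pullback.fst αZ w) (pullback.snd αZ w) αZ w :=
        IsPullback.of_hasPullback αZ w
      set w₀ : pullback αZ w ⟶ Z' := pullback.fst αZ w
      set π : pullback αZ w ⟶ pushout j f := pullback.snd αZ w
      have hcompPB : IsPullback (k' ≫ h₀) β αZ (k ≫ h) := pbB.paste_horiz pbh
      have hu₀w : (k' ≫ h₀) ≫ αZ = (β ≫ u) ≫ w := by
        rw [Category.assoc β u w, huw]; exact hcompPB.w
      set u₀ : pullback αX k ⟶ pullback αZ w := pbP.lift (k' ≫ h₀) (β ≫ u) hu₀w with hu₀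
      have hu₀w₀ : u₀ ≫ w₀ = k' ≫ h₀ := pbP.lift_fst _ _ _
      have hu₀π : u₀ ≫ π = β ≫ u := pbP.lift_snd _ _ _
      have pbu₀ : IsPullback u₀ β π u := by
        refine IsPullback.of_right ?_ hu₀π pbP
        rw [hu₀w₀, huw]; exact hcompPB
      have hv₀w : i₀ ≫ αZ = (αY ≫ v) ≫ w := by
        rw [pbi.w, Category.assoc, hvw]
      set v₀ : Y' ⟶ pullback αZ w := pbP.lift i₀ (αY ≫ v) hv₀w with hv₀
      have hv₀w₀ : v₀ ≫ w₀ = i₀ := pbP.lift_fst _ _ _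
      have hv₀π : v₀ ≫ π = αY ≫ v := pbP.lift_snd _ _ _
      have pbv₀ : IsPullback v₀ αY π v := by
        refine IsPullback.of_right ?_ hv₀π pbP
        rw [hv₀w₀, hvw]; exact pbi
      -- the pulled back left square commutes
      have sq1 : CommSq j₀ g₀ u₀ v₀ := by
        constructor
        apply pbP.hom_ext
        · rw [Category.assoc, Category.assoc, hu₀w₀, hv₀w₀, ← Category.assoc, hj₀k', sq.w]
        · rw [Category.assoc, Category.assoc, hu₀π, hv₀π, ← Category.assoc, hj₀β,
            ← Category.assoc, pbg.w, Category.assoc, Category.assoc, po1.w]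
      -- apply stability of the two pushout squares
      have po1' : IsPushout j₀ g₀ u₀ v₀ :=
        stab1 j₀ g₀ u₀ v₀ αW β αY π pbj₀ pbg pbu₀ pbv₀ sq1
      have sq2 : CommSq k' u₀ h₀ w₀ := ⟨hu₀w₀.symm⟩
      have po2' : IsPushout k' u₀ h₀ w₀ :=
        stab2 k' u₀ h₀ w₀ β αX π αZ pbB pbu₀ pbh pbP sq2
      have := po1'.paste_horiz po2'
      rwa [hj₀k', hv₀w₀] at this
    · -- the composite pushout is a pullback
      have := pbj.paste_horiz pbk
      rwa [hvw] at this

/-- Adhesive morphisms are closed under composition. -/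
theorem adhesive_comp [HasPullbacks C] {X Y Z : C} (m : X ⟶ Y) (m' : Y ⟶ Z)
    (hm : AdhesiveMorphism m) (hm' : AdhesiveMorphism m') :
    AdhesiveMorphism (m ≫ m') := by
  intro W' X'' a n b hpb
  -- factor the pullback of `m ≫ m'` as a pullback of `m` followed by a pullback of `m'`
  have pbP : IsPullback (pullback.fst m' b) (pullback.snd m' b) m' b :=
    IsPullback.of_hasPullback m' b
  have hcomm : (a ≫ m) ≫ m' = n ≫ b := by rw [Category.assoc]; exact hpb.w
  set j : W' ⟶ pullback m' b := pbP.lift (a ≫ m) n hcomm with hjdef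
  have hjfst : j ≫ pullback.fst m' b = a ≫ m := pbP.lift_fst _ _ _
  have hjsnd : j ≫ pullback.snd m' b = n := pbP.lift_snd _ _ _
  have pbj : IsPullback a j m (pullback.fst m' b) := by
    refine IsPullback.of_bot ?_ hjfst.symm pbP
    rwa [hjsnd]
  have hj : AdhesiveMorphism j := adhesive_of_isPullback hm pbj
  have hk : AdhesiveMorphism (pullback.snd m' b) := adhesive_of_isPullback hm' pbP
  have := preAdhesive_comp j (pullback.snd m' b) hj hk
  rwa [hjsnd] at this
end

section
/- The pushout of an adhesive morphism is a monomorphism: if m : C ⟶ A is adhesive and the square with f : C ⟶ B, m : C ⟶ A, g : A ⟶ D, n : B ⟶ D is a pushout, then n is a monomorphism. -/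
open CategoryTheory Limits

universe v u

variable {C : Type u} [Category.{v} C]

/-- A pre-adhesive morphism is a monomorphism: the pushout of `m` along itself
is a pullback, and any two morphisms equalized by `m` are both lifts of the
same cone over that pullback. -/
lemma PreAdhesive.mono {X A : C} {m : X ⟶ A} (pre : PreAdhesive m) : Mono m := by
  haveI : HasPushout m m := pre.1 m
  have S : IsPushout m m (pushout.inl m m) (pushout.inr m m) := IsPushout.of_hasPushout m m
  have Spb : IsPullback m m (pushout.inl m m) (pushout.inr m m) :=
    (pre.2 m (pushout.inl m m) (pushout.inr m m) S).2
  exact ⟨fun {T} a b w => Spb.hom_ext w w⟩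

/-- The pushout of an adhesive morphism is a monomorphism. -/
theorem mono_of_pushout_adhesive [HasPullbacks C] {A B D X : C}
    (m : X ⟶ A) (f : X ⟶ B) (g : A ⟶ D) (n : B ⟶ D)
    (hm : AdhesiveMorphism m) (H : IsPushout m f g n) : Mono n := by
  -- `m` itself is pre-adhesive (pull back along identities), hence a mono.
  have pre : PreAdhesive m := hm (𝟙 X) m (𝟙 A) (IsPullback.id_horiz m)
  haveI hmono : Mono m := pre.mono
  obtain ⟨Hstab, Hpb⟩ := pre.2 f g n H
  -- the kernel pair of `n`
  set q₁ : pullback n n ⟶ B := pullback.fst n n with hq₁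
  set q₂ : pullback n n ⟶ B := pullback.snd n n with hq₂
  -- the "double diagonal" `g' = (f, f) : X ⟶ B ×_D B`
  have wff : f ≫ n = f ≫ n := rfl
  set g' : X ⟶ pullback n n := pullback.lift f f wff with hg'
  have hg'q₁ : g' ≫ q₁ = f := pullback.lift_fst _ _ _
  have hg'q₂ : g' ≫ q₂ = f := pullback.lift_snd _ _ _
  -- the face `IsPullback g' (𝟙 X) q₁ f` of the cube
  have hqn : q₁ ≫ n = q₂ ≫ n := by rw [hq₁, hq₂]; exact pullback.condition
  have face2 : IsPullback g' (𝟙 X) q₁ f := by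
    have comm : g' ≫ q₁ = (𝟙 X) ≫ f := by simpa using hg'q₁
    refine IsPullback.of_isLimit
      (c := PullbackCone.mk g' (𝟙 X) comm)
      (PullbackCone.IsLimit.mk comm (fun s => s.snd) (fun s => ?_) (fun s => by simp)
        (fun s l h₁ h₂ => by simpa using h₂))
    -- key: `s.snd ≫ g' = s.fst`
    · show s.snd ≫ g' = s.fst
      have hcond : s.fst ≫ q₁ = s.snd ≫ f := s.condition
      have hw : (s.snd ≫ m) ≫ g = (s.fst ≫ q₂) ≫ n := by
        simp only [Category.assoc]
        rw [H.w, ← Category.assoc, ← hcond, Category.assoc, hqn]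
      have key : s.snd ≫ f = s.fst ≫ q₂ := by
        have hliftm : Hpb.lift (s.snd ≫ m) (s.fst ≫ q₂) hw ≫ m = s.snd ≫ m :=
          Hpb.lift_fst _ _ _
        have heq : Hpb.lift (s.snd ≫ m) (s.fst ≫ q₂) hw = s.snd := by
          rwa [← cancel_mono m]
        have h2 : Hpb.lift (s.snd ≫ m) (s.fst ≫ q₂) hw ≫ f = s.fst ≫ q₂ :=
          Hpb.lift_snd _ _ _
        rw [heq] at h2
        exact h2
      apply pullback.hom_ext
      · rw [← hq₁, Category.assoc, hg'q₁, ← hcond]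
      · rw [← hq₂, Category.assoc, hg'q₂, key]
  -- the remaining faces
  have face1 : IsPullback (𝟙 X) (𝟙 X) m m := IsKernelPair.id_of_mono m
  have face3 : IsPullback f m n g := Hpb.flip
  have face4 : IsPullback q₂ q₁ n n := (IsPullback.of_hasPullback n n).flip
  have topsq : CommSq (𝟙 X) g' f q₂ := ⟨by simpa using hg'q₂.symm⟩
  -- stability gives the top pushout
  have Kp : IsPushout (𝟙 X) g' f q₂ :=
    Hstab (𝟙 X) g' f q₂ (𝟙 X) m q₁ n face1 face2 face3 face4 topsq
  -- `q₂` is split by `j`, and the splitting is the diagonal, hence `q₁ = q₂`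
  have hjw : (𝟙 X) ≫ g' = g' ≫ 𝟙 (pullback n n) := by simp
  set j : B ⟶ pullback n n := Kp.desc g' (𝟙 _) hjw with hj
  have hq₂j : q₂ ≫ j = 𝟙 _ := Kp.inr_desc _ _ _
  set Δ : B ⟶ pullback n n := pullback.lift (𝟙 B) (𝟙 B) rfl with hΔ
  have hΔq₂ : Δ ≫ q₂ = 𝟙 B := pullback.lift_snd _ _ _
  have hΔq₁ : Δ ≫ q₁ = 𝟙 B := pullback.lift_fst _ _ _
  have hΔj : Δ = j := by
    calc Δ = Δ ≫ (q₂ ≫ j) := by rw [hq₂j, Category.comp_id]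
    _ = (Δ ≫ q₂) ≫ j := by rw [Category.assoc]
    _ = j := by rw [hΔq₂, Category.id_comp]
  have hq : q₁ = q₂ := by
    calc q₁ = (q₂ ≫ j) ≫ q₁ := by rw [hq₂j, Category.id_comp]
    _ = q₂ ≫ (Δ ≫ q₁) := by rw [hΔj, Category.assoc]
    _ = q₂ := by rw [hΔq₁, Category.comp_id]
  -- conclude that `n` is mono
  refine ⟨fun {T} a b w => ?_⟩
  have ha : pullback.lift a b w ≫ q₁ = a := pullback.lift_fst _ _ _
  have hb : pullback.lift a b w ≫ q₂ = b := pullback.lift_snd _ _ _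
  rw [hq] at ha
  exact ha.symm.trans hb
end

section
/- Effectiveness of unions along adhesive subobjects: let h : A ⟶ E be a monomorphism and p : B ⟶ E an adhesive monomorphism in a category with pullbacks. Form the pullback C of h and p (with projections m : C ⟶ A and f : C ⟶ B) and the pushout D of f along m (with coprojections g : A ⟶ D and n : B ⟶ D). Then the induced morphism x : D ⟶ E is a monomorphism. -/
open CategoryTheory Limits

universe v u

variable {C : Type u} [Category.{v} C]

/-- Unions with an adhesive subobject are effective: the induced map out of the
pushout over the intersection is a monomorphism. -/
theorem effective_union [HasPullbacks C] {A B E P D : C}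
    (h : A ⟶ E) (p : B ⟶ E) [Mono h] [Mono p] (hp : AdhesiveMorphism p)
    (m : P ⟶ A) (f : P ⟶ B) (hpb : IsPullback m f h p)
    (g : A ⟶ D) (n : B ⟶ D) (hpo : IsPushout m f g n)
    (x : D ⟶ E) (hx₁ : g ≫ x = h) (hx₂ : n ≫ x = p) : Mono x := by
  -- `m` is a pullback of `p`, hence pre-adhesive
  have pre : PreAdhesive m := hp f m h hpb.flip
  have stab : IsStablePushout hpo := (pre.2 f g n hpo).1
  -- covering lemma: any `t : T ⟶ D` is covered by pieces factoring through `g` and `n`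
  have cover : ∀ {T : C} (t : T ⟶ D), ∃ (A' B' : C) (u : A' ⟶ T) (v : B' ⟶ T)
      (αA : A' ⟶ A) (αB : B' ⟶ B), u ≫ t = αA ≫ g ∧ v ≫ t = αB ≫ n ∧
      (∀ {S : C} (q r : T ⟶ S), u ≫ q = u ≫ r → v ≫ q = v ≫ r → q = r) := by
    intro T t
    refine ⟨pullback g t, pullback n t, pullback.snd g t, pullback.snd n t,
      pullback.fst g t, pullback.fst n t, ?_, ?_, ?_⟩
    · exact (pullback.condition (f := g) (g := t)).symm
    · exact (pullback.condition (f := n) (g := t)).symm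
    · -- build the cube over the pushout square and use stability
      have pbA : IsPullback (pullback.snd g t) (pullback.fst g t) t g :=
        (IsPullback.of_hasPullback g t).flip
      have pbB : IsPullback (pullback.snd n t) (pullback.fst n t) t n :=
        (IsPullback.of_hasPullback n t).flip
      have pbP : IsPullback (pullback.fst (pullback.fst g t) m)
          (pullback.snd (pullback.fst g t) m) (pullback.fst g t) m :=
        IsPullback.of_hasPullback _ _
      -- the induced map from the triple pullback to the pullback over `n`
      have wg : (pullback.snd (pullback.fst g t) m ≫ f) ≫ n =
          (pullback.fst (pullback.fst g t) m ≫ pullback.snd g t) ≫ t := by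
        simp only [Category.assoc, ← hpo.w]
        rw [pbA.w, reassoc_of% pbP.w]
      set g' : pullback (pullback.fst g t) m ⟶ pullback n t := pullback.lift _ _ wg with hg'
      have hg'B : g' ≫ pullback.fst n t = pullback.snd (pullback.fst g t) m ≫ f :=
        pullback.lift_fst _ _ _
      have hg'T : g' ≫ pullback.snd n t =
          pullback.fst (pullback.fst g t) m ≫ pullback.snd g t :=
        pullback.lift_snd _ _ _
      have big : IsPullback (pullback.fst (pullback.fst g t) m ≫ pullback.snd g t)
          (pullback.snd (pullback.fst g t) m) t (m ≫ g) :=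
        pbP.paste_horiz pbA
      have big' : IsPullback (g' ≫ pullback.snd n t)
          (pullback.snd (pullback.fst g t) m) t (f ≫ n) := by
        rw [hg'T, ← hpo.w]; exact big
      have pbg : IsPullback g' (pullback.snd (pullback.fst g t) m)
          (pullback.fst n t) f :=
        IsPullback.of_right big' hg'B pbB
      have topsq : CommSq (pullback.fst (pullback.fst g t) m) g'
          (pullback.snd g t) (pullback.snd n t) := ⟨hg'T.symm⟩
      have po := stab (pullback.fst (pullback.fst g t) m) g'
        (pullback.snd g t) (pullback.snd n t)
        (pullback.snd (pullback.fst g t) m) (pullback.fst g t) (pullback.fst n t) t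
        pbP pbg pbA pbB topsq
      intro S q r hq hr
      exact po.hom_ext hq hr
  -- now prove monomorphy
  constructor
  intro T a b hab
  obtain ⟨A', B', u, v, αA, αB, hu, hv, jointEpi⟩ := cover a
  -- show u ≫ a = u ≫ b
  have hua : u ≫ a = u ≫ b := by
    obtain ⟨A'', B'', u', v', γ, δ, hu', hv', jointEpi'⟩ := cover (u ≫ b)
    apply jointEpi'
    · -- via mono h
      have t1 : u' ≫ u ≫ b ≫ x = u' ≫ u ≫ a ≫ x := by rw [hab]
      rw [reassoc_of% hu', hx₁, reassoc_of% hu, hx₁, ← Category.assoc] at t1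
      have e2 : γ = u' ≫ αA := by rwa [cancel_mono h] at t1
      calc u' ≫ u ≫ a = u' ≫ αA ≫ g := by rw [hu]
        _ = γ ≫ g := by rw [e2, Category.assoc]
        _ = u' ≫ u ≫ b := hu'.symm
    · -- via the pullback property of P
      have t1 : v' ≫ u ≫ a ≫ x = v' ≫ u ≫ b ≫ x := by rw [hab]
      rw [reassoc_of% hu, hx₁, reassoc_of% hv', hx₂, ← Category.assoc] at t1
      have hlm : hpb.lift (v' ≫ αA) δ t1 ≫ m = v' ≫ αA := hpb.lift_fst _ _ _
      have hlf : hpb.lift (v' ≫ αA) δ t1 ≫ f = δ := hpb.lift_snd _ _ _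
      calc v' ≫ u ≫ a = v' ≫ αA ≫ g := by rw [hu]
        _ = (hpb.lift (v' ≫ αA) δ t1 ≫ m) ≫ g := by rw [hlm, Category.assoc]
        _ = (hpb.lift (v' ≫ αA) δ t1 ≫ f) ≫ n := by
              rw [Category.assoc, Category.assoc, hpo.w]
        _ = δ ≫ n := by rw [hlf]
        _ = v' ≫ u ≫ b := hv'.symm
  -- show v ≫ a = v ≫ b (symmetric)
  have hva : v ≫ a = v ≫ b := by
    obtain ⟨A'', B'', u', v', γ, δ, hu', hv', jointEpi'⟩ := cover (v ≫ b)
    apply jointEpi'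
    · -- via the pullback property of P
      have t1 : u' ≫ v ≫ b ≫ x = u' ≫ v ≫ a ≫ x := by rw [hab]
      rw [reassoc_of% hu', hx₁, reassoc_of% hv, hx₂, ← Category.assoc] at t1
      have hlm : hpb.lift γ (u' ≫ αB) t1 ≫ m = γ := hpb.lift_fst _ _ _
      have hlf : hpb.lift γ (u' ≫ αB) t1 ≫ f = u' ≫ αB := hpb.lift_snd _ _ _
      calc u' ≫ v ≫ a = u' ≫ αB ≫ n := by rw [hv]
        _ = (hpb.lift γ (u' ≫ αB) t1 ≫ f) ≫ n := by rw [hlf, Category.assoc]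
        _ = (hpb.lift γ (u' ≫ αB) t1 ≫ m) ≫ g := by
              rw [Category.assoc, Category.assoc, hpo.w]
        _ = γ ≫ g := by rw [hlm]
        _ = u' ≫ v ≫ b := hu'.symm
    · -- via mono p
      have t1 : v' ≫ v ≫ b ≫ x = v' ≫ v ≫ a ≫ x := by rw [hab]
      rw [reassoc_of% hv', hx₂, reassoc_of% hv, hx₂, ← Category.assoc] at t1
      have e2 : δ = v' ≫ αB := by rwa [cancel_mono p] at t1
      calc v' ≫ v ≫ a = v' ≫ αB ≫ n := by rw [hv]
        _ = δ ≫ n := by rw [e2, Category.assoc]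
        _ = v' ≫ v ≫ b := hv'.symm
  exact jointEpi a b hua hva
end

section
/- Let 𝒞 be a category with pullbacks in which split monomorphisms are adhesive and adhesive subobjects are closed under binary union. Let m : C ⟶ A be adhesive, f : C ⟶ B arbitrary, and form the pushout g : A ⟶ D, n : B ⟶ D of f along m. Let (f₁, f₂) : C₂ ⇉ C and (g₁, g₂) : A₂ ⇉ A be the kernel pairs of f and g respectively, m₂ : C₂ ⟶ A₂ the induced map, and γ : C ⟶ C₂, δ : A ⟶ A₂ the diagonals. Then the square (γ, m, m₂, δ) is both a pushout and a pullback. -/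
open CategoryTheory Limits

universe v u

variable {C : Type u} [Category.{v} C]

/-- Adhesive subobjects are closed under binary union: the union (pushout over
the intersection) of two adhesive subobjects is again adhesive. -/
def AdhesiveUnionClosed (C : Type u) [Category.{v} C] : Prop :=
  ∀ {X A₁ A₂ P Q : C} (m₁ : A₁ ⟶ X) (m₂ : A₂ ⟶ X) (p₁ : P ⟶ A₁) (p₂ : P ⟶ A₂)
    (q₁ : A₁ ⟶ Q) (q₂ : A₂ ⟶ Q) (u : Q ⟶ X),
    Mono m₁ → Mono m₂ → AdhesiveMorphism m₁ → AdhesiveMorphism m₂ →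
    IsPullback p₁ p₂ m₁ m₂ → IsPushout p₁ p₂ q₁ q₂ →
    q₁ ≫ u = m₁ → q₂ ≫ u = m₂ → AdhesiveMorphism u

/-- Every split monomorphism is adhesive. -/
def SplitMonosAdhesive (C : Type u) [Category.{v} C] : Prop :=
  ∀ {X Y : C} (s : X ⟶ Y), IsSplitMono s → AdhesiveMorphism s

/-- An adhesive morphism is pre-adhesive (pull it back along the identity square). -/
lemma preAdhesive_of_adhesiveMorphism {W X : C} {m : W ⟶ X} (h : AdhesiveMorphism m) :
    PreAdhesive m :=
  h (𝟙 W) m (𝟙 X) IsPullback.of_id_fst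

/-- A pre-adhesive morphism is a monomorphism: the pushout of `m` along itself is
a pullback, and both members of a parallel pair equalised by `m` are lifts for the
corresponding cone. -/
lemma mono_of_preAdhesive {W X : C} {m : W ⟶ X} (h : PreAdhesive m) : Mono m := by
  haveI : HasPushout m m := h.1 m
  have hpo : IsPushout m m (pushout.inl m m) (pushout.inr m m) := IsPushout.of_hasPushout m m
  have hpb : IsPullback m m (pushout.inl m m) (pushout.inr m m) := (h.2 m _ _ hpo).2
  exact ⟨fun {T} a b hab => hpb.hom_ext hab hab⟩

/-- The key comparison lemma: if a span admits a pushout along `a` with cocone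
`(h, i)`, and the span obtained by composing with `u` admits a pushout with
cocone `(h₀, i)` where `u ≫ h₀ = h`, and `u` is a pre-adhesive monomorphism,
then `u` is an isomorphism. -/
lemma isIso_of_pushout_comparison
    {Z₀ X₀ X₀' Y₀ P₀ : C} {a : Z₀ ⟶ X₀} {k : Z₀ ⟶ Y₀} {h : X₀ ⟶ P₀} {i : Y₀ ⟶ P₀}
    {u : X₀ ⟶ X₀'} {h₀ : X₀' ⟶ P₀}
    (SQ1 : IsPushout a k h i) (SQ2 : IsPushout (a ≫ u) k h₀ i)
    (hu : u ≫ h₀ = h) (hpu : PreAdhesive u) (monoU : Mono u) : IsIso u := by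
  haveI := monoU
  haveI : HasPushout u h := hpu.1 h
  have ESQ : IsPushout u h (pushout.inl u h) (pushout.inr u h) := IsPushout.of_hasPushout u h
  have EPB : IsPullback u h (pushout.inl u h) (pushout.inr u h) := (hpu.2 h _ _ ESQ).2
  have wj : (a ≫ u) ≫ pushout.inl u h = k ≫ (i ≫ pushout.inr u h) := by
    rw [Category.assoc, ESQ.w, ← Category.assoc, SQ1.w, Category.assoc]
  have hj₁ : h₀ ≫ SQ2.desc (pushout.inl u h) (i ≫ pushout.inr u h) wj = pushout.inl u h :=
    SQ2.inl_desc _ _ _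
  have hj₂ : i ≫ SQ2.desc (pushout.inl u h) (i ≫ pushout.inr u h) wj =
      i ≫ pushout.inr u h := SQ2.inr_desc _ _ _
  have t1 : h ≫ SQ2.desc (pushout.inl u h) (i ≫ pushout.inr u h) wj =
      h ≫ pushout.inr u h :=
    calc h ≫ SQ2.desc (pushout.inl u h) (i ≫ pushout.inr u h) wj
        = (u ≫ h₀) ≫ SQ2.desc (pushout.inl u h) (i ≫ pushout.inr u h) wj := by rw [hu]
      _ = u ≫ (h₀ ≫ SQ2.desc (pushout.inl u h) (i ≫ pushout.inr u h) wj) := by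
          rw [Category.assoc]
      _ = u ≫ pushout.inl u h := by rw [hj₁]
      _ = h ≫ pushout.inr u h := ESQ.w
  have hje : SQ2.desc (pushout.inl u h) (i ≫ pushout.inr u h) wj = pushout.inr u h :=
    SQ1.hom_ext t1 hj₂
  have he' : 𝟙 X₀' ≫ pushout.inl u h = h₀ ≫ pushout.inr u h := by
    rw [Category.id_comp, ← hj₁, hje]
  have hl : EPB.lift (𝟙 X₀') h₀ he' ≫ u = 𝟙 X₀' := EPB.lift_fst _ _ _
  refine ⟨EPB.lift (𝟙 X₀') h₀ he', ?_, hl⟩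
  have hh : (u ≫ EPB.lift (𝟙 X₀') h₀ he') ≫ u = 𝟙 X₀ ≫ u := by
    rw [Category.assoc, hl, Category.comp_id, Category.id_comp]
  exact (cancel_mono u).1 hh

/-- Given a pushout of an adhesive morphism `m` along `f`, the square formed by
the diagonals into the kernel pairs of `f` and `g` and the induced map between
the kernel pairs is both a pushout and a pullback. -/
theorem diagonal_square_pushout_pullback [HasPullbacks C]
    (hsplit : SplitMonosAdhesive C) (hunion : AdhesiveUnionClosed C)
    {X A B D C₂ A₂ : C} (m : X ⟶ A) (f : X ⟶ B) (g : A ⟶ D) (n : B ⟶ D)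
    (hm : AdhesiveMorphism m) (H : IsPushout m f g n)
    (f₁ f₂ : C₂ ⟶ X) (hf : IsKernelPair f f₁ f₂)
    (g₁ g₂ : A₂ ⟶ A) (hg : IsKernelPair g g₁ g₂)
    (m₂ : C₂ ⟶ A₂) (hm₂₁ : m₂ ≫ g₁ = f₁ ≫ m) (hm₂₂ : m₂ ≫ g₂ = f₂ ≫ m)
    (γ : X ⟶ C₂) (hγ₁ : γ ≫ f₁ = 𝟙 X) (hγ₂ : γ ≫ f₂ = 𝟙 X)
    (δ : A ⟶ A₂) (hδ₁ : δ ≫ g₁ = 𝟙 A) (hδ₂ : δ ≫ g₂ = 𝟙 A) :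
    IsPushout γ m m₂ δ ∧ IsPullback γ m m₂ δ := by
  -- Pre-adhesivity of `m`; the pushout `H` is stable and a pullback; `m` is mono.
  have hpm : PreAdhesive m := hm (𝟙 X) m (𝟙 A) IsPullback.of_id_fst
  have hH := hpm.2 f g n H
  have Hst : IsStablePushout H := hH.1
  have Hpb : IsPullback m f g n := hH.2
  have monoM : Mono m := mono_of_preAdhesive hpm
  haveI := monoM
  -- Commutativity of the diagonal square.
  have wγ : γ ≫ m₂ = m ≫ δ := by
    refine hg.hom_ext ?_ ?_
    · rw [Category.assoc, Category.assoc, hm₂₁, hδ₁, Category.comp_id, ← Category.assoc, hγ₁,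
        Category.id_comp]
    · rw [Category.assoc, Category.assoc, hm₂₂, hδ₂, Category.comp_id, ← Category.assoc, hγ₂,
        Category.id_comp]
  -- The diagonal square is a pullback.
  have pbGoal : IsPullback γ m m₂ δ := by
    refine IsPullback.of_isLimit (PullbackCone.IsLimit.mk wγ (fun s => s.fst ≫ f₁) ?_ ?_ ?_)
    · intro s
      have h1 : s.fst ≫ f₁ ≫ m = s.snd := by
        have h := congrArg (fun t => t ≫ g₁) s.condition
        simp only [Category.assoc, hm₂₁, hδ₁, Category.comp_id] at h
        exact h
      have h2 : s.fst ≫ f₂ ≫ m = s.snd := by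
        have h := congrArg (fun t => t ≫ g₂) s.condition
        simp only [Category.assoc, hm₂₂, hδ₂, Category.comp_id] at h
        exact h
      have h12 : s.fst ≫ f₁ = s.fst ≫ f₂ := by
        refine (cancel_mono m).1 ?_
        rw [Category.assoc, Category.assoc, h1, h2]
      refine hf.hom_ext ?_ ?_
      · rw [Category.assoc, Category.assoc, hγ₁, Category.comp_id]
      · rw [Category.assoc, Category.assoc, hγ₂, Category.comp_id, h12]
    · intro s
      have h := congrArg (fun t => t ≫ g₁) s.condition
      simp only [Category.assoc, hm₂₁, hδ₁, Category.comp_id] at h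
      rw [Category.assoc]
      exact h
    · intro s t h₁ h₂
      show t = s.fst ≫ f₁
      rw [← h₁, Category.assoc, hγ₁, Category.comp_id]
  -- `C₂` is the pullback of `m` along `g₁` (and along `g₂`).
  have pbA : IsPullback f₁ m₂ m g₁ := by
    refine IsPullback.of_isLimit (PullbackCone.IsLimit.mk hm₂₁.symm
      (fun s => hf.lift s.fst
        (Hpb.lift (s.snd ≫ g₂) (s.fst ≫ f)
          (by rw [Category.assoc, Category.assoc, ← hg.w, ← Category.assoc, ← s.condition,
            Category.assoc, H.w]))
        (by rw [Hpb.lift_snd]))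
      ?_ ?_ ?_)
    · intro s; rw [hf.lift_fst]
    · intro s
      refine hg.hom_ext ?_ ?_
      · rw [Category.assoc, hm₂₁, ← Category.assoc, hf.lift_fst, s.condition]
      · rw [Category.assoc, hm₂₂, ← Category.assoc, hf.lift_snd, Hpb.lift_fst]
    · intro s t h₁ h₂
      refine hf.hom_ext ?_ ?_
      · rw [hf.lift_fst, h₁]
      · rw [hf.lift_snd]
        refine (cancel_mono m).1 ?_
        rw [Hpb.lift_fst, Category.assoc, ← hm₂₂, ← Category.assoc, h₂]
  have pbA₂ : IsPullback f₂ m₂ m g₂ := by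
    refine IsPullback.of_isLimit (PullbackCone.IsLimit.mk hm₂₂.symm
      (fun s => hf.lift
        (Hpb.lift (s.snd ≫ g₁) (s.fst ≫ f)
          (by rw [Category.assoc, Category.assoc, hg.w, ← Category.assoc, ← s.condition,
            Category.assoc, H.w]))
        s.fst
        (by rw [Hpb.lift_snd]))
      ?_ ?_ ?_)
    · intro s; rw [hf.lift_snd]
    · intro s
      refine hg.hom_ext ?_ ?_
      · rw [Category.assoc, hm₂₁, ← Category.assoc, hf.lift_fst, Hpb.lift_fst]
      · rw [Category.assoc, hm₂₂, ← Category.assoc, hf.lift_snd, s.condition]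
    · intro s t h₁ h₂
      refine hf.hom_ext ?_ ?_
      · rw [hf.lift_fst]
        refine (cancel_mono m).1 ?_
        rw [Hpb.lift_fst, Category.assoc, ← hm₂₁, ← Category.assoc, h₂]
      · rw [hf.lift_snd, h₁]
  -- The stability cube over `H` along `g` yields the pushout `P₁`.
  have P₁ : IsPushout m₂ f₁ g₁ m :=
    Hst m₂ f₁ g₁ m f₂ g₂ f g pbA₂.flip hf hg Hpb ⟨hm₂₁⟩
  -- `m₂` and `δ` are monomorphisms.
  have monoM₂ : Mono m₂ := by
    refine ⟨fun {T} a b hab => hf.hom_ext ?_ ?_⟩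
    · refine (cancel_mono m).1 ?_
      rw [Category.assoc, Category.assoc, ← hm₂₁, ← Category.assoc, ← Category.assoc, hab]
    · refine (cancel_mono m).1 ?_
      rw [Category.assoc, Category.assoc, ← hm₂₂, ← Category.assoc, ← Category.assoc, hab]
  have monoδ : Mono δ := by
    refine ⟨fun {T} a b hab => ?_⟩
    have h := congrArg (fun t => t ≫ g₁) hab
    simpa only [Category.assoc, hδ₁, Category.comp_id] using h
  -- `γ`, `δ`, `m₂` are adhesive.
  have adhγ : AdhesiveMorphism γ := hsplit γ (IsSplitMono.mk' ⟨f₁, hγ₁⟩)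
  have adhδ : AdhesiveMorphism δ := hsplit δ (IsSplitMono.mk' ⟨g₁, hδ₁⟩)
  have adhM₂ : AdhesiveMorphism m₂ := by
    intro W' X' a m' b hpb
    exact hm (a ≫ f₁) m' (b ≫ g₁) (hpb.paste_horiz pbA)
  -- The union: the pushout `Q` of `γ` and `m`, with comparison `u` into `A₂`.
  have hpγ : PreAdhesive γ := preAdhesive_of_adhesiveMorphism adhγ
  haveI : HasPushout γ m := hpγ.1 m
  have QSQ : IsPushout γ m (pushout.inl γ m) (pushout.inr γ m) := IsPushout.of_hasPushout γ m
  have hq₁u : pushout.inl γ m ≫ pushout.desc m₂ δ wγ = m₂ := pushout.inl_desc _ _ _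
  have hq₂u : pushout.inr γ m ≫ pushout.desc m₂ δ wγ = δ := pushout.inr_desc _ _ _
  have adhU : AdhesiveMorphism (pushout.desc m₂ δ wγ) :=
    hunion m₂ δ γ m (pushout.inl γ m) (pushout.inr γ m) (pushout.desc m₂ δ wγ)
      monoM₂ monoδ adhM₂ adhδ pbGoal QSQ hq₁u hq₂u
  have hpu : PreAdhesive (pushout.desc m₂ δ wγ) := preAdhesive_of_adhesiveMorphism adhU
  have monoU : Mono (pushout.desc m₂ δ wγ) := mono_of_preAdhesive hpu
  -- The square `(q₁, f₁, u ≫ g₁, m)` is a pushout.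
  have wS : pushout.inl γ m ≫ (pushout.desc m₂ δ wγ ≫ g₁) = f₁ ≫ m := by
    rw [← Category.assoc, hq₁u, hm₂₁]
  have rq₁u : ∀ {T : C} (k : A₂ ⟶ T),
      pushout.inl γ m ≫ pushout.desc m₂ δ wγ ≫ k = m₂ ≫ k := by
    intro T k; rw [← Category.assoc, hq₁u]
  have rq₂u : ∀ {T : C} (k : A₂ ⟶ T),
      pushout.inr γ m ≫ pushout.desc m₂ δ wγ ≫ k = δ ≫ k := by
    intro T k; rw [← Category.assoc, hq₂u]
  have rm₂₁ : ∀ {T : C} (k : A ⟶ T), m₂ ≫ g₁ ≫ k = f₁ ≫ m ≫ k := by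
    intro T k; rw [← Category.assoc, hm₂₁, Category.assoc]
  have rQw : ∀ {T : C} (k : pushout γ m ⟶ T),
      m ≫ pushout.inr γ m ≫ k = γ ≫ pushout.inl γ m ≫ k := by
    intro T k; rw [← Category.assoc, ← QSQ.w, Category.assoc]
  have rγ₁ : ∀ {T : C} (k : X ⟶ T), γ ≫ f₁ ≫ k = k := by
    intro T k; rw [← Category.assoc, hγ₁, Category.id_comp]
  have rδ₁ : ∀ {T : C} (k : A ⟶ T), δ ≫ g₁ ≫ k = k := by
    intro T k; rw [← Category.assoc, hδ₁, Category.id_comp]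
  have sA : IsPushout (pushout.inl γ m) f₁ (pushout.desc m₂ δ wγ ≫ g₁) m := by
    refine IsPushout.of_isColimit (PushoutCocone.IsColimit.mk wS
      (fun s => pushout.inr γ m ≫ s.inl) ?_ ?_ ?_)
    · intro s
      refine QSQ.hom_ext ?_ ?_
      · show pushout.inl γ m ≫ (pushout.desc m₂ δ wγ ≫ g₁) ≫ pushout.inr γ m ≫ s.inl =
          pushout.inl γ m ≫ s.inl
        simp only [Category.assoc]
        rw [rq₁u, rm₂₁, rQw, s.condition, rγ₁, ← s.condition]
      · show pushout.inr γ m ≫ (pushout.desc m₂ δ wγ ≫ g₁) ≫ pushout.inr γ m ≫ s.inl =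
          pushout.inr γ m ≫ s.inl
        simp only [Category.assoc]
        rw [rq₂u, rδ₁]
    · intro s
      show m ≫ pushout.inr γ m ≫ s.inl = s.inr
      rw [rQw, s.condition, rγ₁]
    · intro s t h₁ h₂
      have e2 : pushout.inr γ m ≫ (pushout.desc m₂ δ wγ ≫ g₁) ≫ t = t := by
        simp only [Category.assoc]
        rw [rq₂u, rδ₁]
      calc t = pushout.inr γ m ≫ (pushout.desc m₂ δ wγ ≫ g₁) ≫ t := e2.symm
        _ = pushout.inr γ m ≫ s.inl := by rw [h₁]
  -- Comparison: `u` is an isomorphism.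
  have SQ2 : IsPushout (pushout.inl γ m ≫ pushout.desc m₂ δ wγ) f₁ g₁ m := by
    rw [hq₁u]; exact P₁
  haveI isoU : IsIso (pushout.desc m₂ δ wγ) :=
    isIso_of_pushout_comparison sA SQ2 rfl hpu monoU
  -- Transport the pushout `QSQ` along the isomorphism `u`.
  refine ⟨?_, pbGoal⟩
  refine QSQ.of_iso (Iso.refl X) (Iso.refl C₂) (Iso.refl A) (asIso (pushout.desc m₂ δ wγ))
    ?_ ?_ ?_ ?_
  · simp
  · simp
  · simpa using hq₁u
  · simpa using hq₂u
end

section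
/- In an rm-quasiadhesive category, if m : A ⟶ X is the union of two regular subobjects m₁ : A₁ ⟶ X and m₂ : A₂ ⟶ X (constructed as the pushout over their intersection), then m factors as a stable epimorphism followed by a regular monomorphism, and this factorization is stable under pullback. -/
open CategoryTheory Limits

universe v u

variable {C : Type u} [Category.{v} C]

/-- A category with pullbacks is rm-adhesive if it has pushouts along regular
monomorphisms and these pushouts are van Kampen. -/
def RmAdhesive (C : Type u) [Category.{v} C] : Prop :=
  (∀ {X Y Z : C} (m : Z ⟶ X) (f : Z ⟶ Y), RegularMono m → HasPushout m f) ∧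
  ∀ {X Y Z W : C} (m : Z ⟶ X) (f : Z ⟶ Y) (g : X ⟶ W) (n : Y ⟶ W),
    RegularMono m → ∀ (H : IsPushout m f g n), H.IsVanKampen

/-- A category with pullbacks is rm-quasiadhesive if it has pushouts along
regular monomorphisms and these pushouts are stable under pullback and are
pullback squares. -/
def RmQuasiadhesive (C : Type u) [Category.{v} C] : Prop :=
  (∀ {X Y Z : C} (m : Z ⟶ X) (f : Z ⟶ Y), RegularMono m → HasPushout m f) ∧
  ∀ {X Y Z W : C} (m : Z ⟶ X) (f : Z ⟶ Y) (g : X ⟶ W) (n : Y ⟶ W),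
    RegularMono m → ∀ (H : IsPushout m f g n),
      IsStablePushout H ∧ IsPullback m f g n

/-- A stable epimorphism: every pullback of it is an epimorphism. -/
def StableEpi {X Y : C} (e : X ⟶ Y) : Prop :=
  ∀ {X' Y' : C} (e' : X' ⟶ Y') (a : X' ⟶ X) (b : Y' ⟶ Y),
    IsPullback a e' e b → Epi e'

/-- Pulling back a stable pushout square along a morphism into its vertex yields a pushout
square on the pullbacks. -/
lemma pbcube' {W X Y Z : C} {f : W ⟶ X} {g : W ⟶ Y} {h : X ⟶ Z} {i : Y ⟶ Z}
    (H : IsPushout f g h i) (hst : IsStablePushout H)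
    {W' X' Y' Z' : C} {αZ : Z' ⟶ Z}
    {fX : X' ⟶ X} {sX : X' ⟶ Z'} (hX : IsPullback fX sX h αZ)
    {fY : Y' ⟶ Y} {sY : Y' ⟶ Z'} (hY : IsPullback fY sY i αZ)
    {fW : W' ⟶ W} {sW : W' ⟶ Z'} (hW : IsPullback fW sW (f ≫ h) αZ)
    (f' : W' ⟶ X') (g' : W' ⟶ Y')
    (hf1 : f' ≫ fX = fW ≫ f) (hf2 : f' ≫ sX = sW)
    (hg1 : g' ≫ fY = fW ≫ g) (hg2 : g' ≫ sY = sW) :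
    IsPushout f' g' sX sY := by
  have bigf : IsPullback (f' ≫ sX) fW αZ (f ≫ h) := by rw [hf2]; exact hW.flip
  have bigg : IsPullback (g' ≫ sY) fW αZ (g ≫ i) := by rw [hg2, ← H.w]; exact hW.flip
  exact hst f' g' sX sY fW fX fY αZ (IsPullback.of_right bigf hf1 hX.flip)
    (IsPullback.of_right bigg hg1 hY.flip) hX.flip hY.flip ⟨hf2.trans hg2.symm⟩

/-- The comparison map `k` from the cokernel pair of the intersection to the cokernel pair
of `m₁` is a regular monomorphism: it is the pullback of `m₂` along the codiagonal. -/
lemma regk_aux [HasPullbacks C] {X A₁ A₂ P C₁ D : C} {m₁ : A₁ ⟶ X} {m₂ : A₂ ⟶ X}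
    {p₁ : P ⟶ A₁} {p₂ : P ⟶ A₂} (hm₂ : RegularMono m₂) (hpb : IsPullback p₁ p₂ m₁ m₂)
    {c₁ c₂ : X ⟶ C₁} (hCP₁ : IsPushout m₁ m₁ c₁ c₂) (hst₁ : IsStablePushout hCP₁)
    {d₁ d₂ : A₂ ⟶ D} (hCP₂ : IsPushout p₂ p₂ d₁ d₂)
    {k : D ⟶ C₁} {dl : D ⟶ A₂} {dc : C₁ ⟶ X}
    (hd₁k : d₁ ≫ k = m₂ ≫ c₁) (hd₂k : d₂ ≫ k = m₂ ≫ c₂)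
    (hd₁dl : d₁ ≫ dl = 𝟙 A₂) (hd₂dl : d₂ ≫ dl = 𝟙 A₂)
    (hc₁dc : c₁ ≫ dc = 𝟙 X) (hc₂dc : c₂ ≫ dc = 𝟙 X) : Nonempty (RegularMono k) := by
  haveI := hm₂
  obtain ⟨D'', fD, sD, hD⟩ : ∃ (D'' : C) (fD : D'' ⟶ C₁) (sD : D'' ⟶ A₂),
      IsPullback fD sD dc m₂ := ⟨_, _, _, IsPullback.of_hasPullback dc m₂⟩
  obtain ⟨P1, f1, s1, hP1⟩ : ∃ (P1 : C) (f1 : P1 ⟶ X) (s1 : P1 ⟶ D''),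
      IsPullback f1 s1 c₁ fD := ⟨_, _, _, IsPullback.of_hasPullback c₁ fD⟩
  obtain ⟨P2, f2, s2, hP2⟩ : ∃ (P2 : C) (f2 : P2 ⟶ X) (s2 : P2 ⟶ D''),
      IsPullback f2 s2 c₂ fD := ⟨_, _, _, IsPullback.of_hasPullback c₂ fD⟩
  obtain ⟨PW, fW, sW, hPW⟩ : ∃ (PW : C) (fW : PW ⟶ A₁) (sW : PW ⟶ D''),
      IsPullback fW sW (m₁ ≫ c₁) fD := ⟨_, _, _, IsPullback.of_hasPullback (m₁ ≫ c₁) fD⟩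
  have e1 : (fW ≫ m₁) ≫ c₁ = sW ≫ fD := by rw [Category.assoc]; exact hPW.w
  have e2 : (fW ≫ m₁) ≫ c₂ = sW ≫ fD := by rw [Category.assoc, ← hCP₁.w]; exact hPW.w
  have OUT : IsPushout (hP1.lift (fW ≫ m₁) sW e1) (hP2.lift (fW ≫ m₁) sW e2) s1 s2 :=
    pbcube' hCP₁ hst₁ hP1 hP2 hPW _ _ (hP1.lift_fst _ _ _) (hP1.lift_snd _ _ _)
      (hP2.lift_fst _ _ _) (hP2.lift_snd _ _ _)
  -- canonical maps j₁ j₂ : A₂ ⟶ D''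
  have hj₁w : (m₂ ≫ c₁) ≫ dc = 𝟙 A₂ ≫ m₂ := by
    rw [Category.assoc, hc₁dc, Category.comp_id, Category.id_comp]
  have hj₂w : (m₂ ≫ c₂) ≫ dc = 𝟙 A₂ ≫ m₂ := by
    rw [Category.assoc, hc₂dc, Category.comp_id, Category.id_comp]
  have hbase : p₂ ≫ m₂ ≫ c₁ = p₂ ≫ m₂ ≫ c₂ := by
    calc p₂ ≫ m₂ ≫ c₁ = (p₂ ≫ m₂) ≫ c₁ := by rw [Category.assoc]
      _ = (p₁ ≫ m₁) ≫ c₁ := by rw [hpb.w]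
      _ = p₁ ≫ m₁ ≫ c₁ := by rw [Category.assoc]
      _ = p₁ ≫ m₁ ≫ c₂ := by rw [hCP₁.w]
      _ = (p₁ ≫ m₁) ≫ c₂ := by rw [Category.assoc]
      _ = (p₂ ≫ m₂) ≫ c₂ := by rw [hpb.w]
      _ = p₂ ≫ m₂ ≫ c₂ := by rw [Category.assoc]
  have wφ : p₂ ≫ hD.lift (m₂ ≫ c₁) (𝟙 A₂) hj₁w = p₂ ≫ hD.lift (m₂ ≫ c₂) (𝟙 A₂) hj₂w := by
    apply hD.hom_ext
    · rw [Category.assoc, Category.assoc, hD.lift_fst, hD.lift_fst, ← Category.assoc,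
        ← Category.assoc]
      rw [← Category.assoc, ← Category.assoc] at hbase
      exact hbase
    · rw [Category.assoc, Category.assoc, hD.lift_snd, hD.lift_snd]
  have key1 : f1 = s1 ≫ sD ≫ m₂ := by
    calc f1 = (f1 ≫ c₁) ≫ dc := by rw [Category.assoc, hc₁dc, Category.comp_id]
      _ = s1 ≫ fD ≫ dc := by rw [hP1.w, Category.assoc]
      _ = s1 ≫ sD ≫ m₂ := by rw [hD.w]
  have key2 : f2 = s2 ≫ sD ≫ m₂ := by
    calc f2 = (f2 ≫ c₂) ≫ dc := by rw [Category.assoc, hc₂dc, Category.comp_id]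
      _ = s2 ≫ fD ≫ dc := by rw [hP2.w, Category.assoc]
      _ = s2 ≫ sD ≫ m₂ := by rw [hD.w]
  have eπ : fW ≫ m₁ = (sW ≫ sD) ≫ m₂ := by
    calc fW ≫ m₁ = ((fW ≫ m₁) ≫ c₁) ≫ dc := by
          rw [Category.assoc, Category.assoc, hc₁dc, Category.comp_id]
      _ = (sW ≫ fD) ≫ dc := by rw [e1]
      _ = (sW ≫ sD) ≫ m₂ := by rw [Category.assoc, hD.w, Category.assoc]
  obtain ⟨π, hπ⟩ : ∃ π : PW ⟶ P, π ≫ p₂ = sW ≫ sD :=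
    ⟨hpb.lift fW (sW ≫ sD) eπ, hpb.lift_snd _ _ _⟩
  have wψ : (hP1.lift (fW ≫ m₁) sW e1) ≫ (s1 ≫ sD ≫ d₁) =
      (hP2.lift (fW ≫ m₁) sW e2) ≫ (s2 ≫ sD ≫ d₂) := by
    conv_lhs => rw [← Category.assoc, hP1.lift_snd]
    conv_rhs => rw [← Category.assoc, hP2.lift_snd]
    calc sW ≫ sD ≫ d₁ = (sW ≫ sD) ≫ d₁ := by rw [Category.assoc]
      _ = π ≫ p₂ ≫ d₁ := by rw [← hπ, Category.assoc]
      _ = π ≫ p₂ ≫ d₂ := by rw [hCP₂.w]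
      _ = (sW ≫ sD) ≫ d₂ := by rw [← Category.assoc, hπ]
      _ = sW ≫ sD ≫ d₂ := by rw [Category.assoc]
  have hs1ψ : s1 ≫ OUT.desc (s1 ≫ sD ≫ d₁) (s2 ≫ sD ≫ d₂) wψ = s1 ≫ sD ≫ d₁ :=
    OUT.inl_desc _ _ _
  have hs2ψ : s2 ≫ OUT.desc (s1 ≫ sD ≫ d₁) (s2 ≫ sD ≫ d₂) wψ = s2 ≫ sD ≫ d₂ :=
    OUT.inr_desc _ _ _
  set ψ := OUT.desc (s1 ≫ sD ≫ d₁) (s2 ≫ sD ≫ d₂) wψ with hψdef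
  set j₁ := hD.lift (m₂ ≫ c₁) (𝟙 A₂) hj₁w with hj₁def
  set j₂ := hD.lift (m₂ ≫ c₂) (𝟙 A₂) hj₂w with hj₂def
  set φ := hCP₂.desc j₁ j₂ wφ with hφdef
  have hd₁φ : d₁ ≫ φ = j₁ := hCP₂.inl_desc _ _ _
  have hd₂φ : d₂ ≫ φ = j₂ := hCP₂.inr_desc _ _ _
  have hj₁f : j₁ ≫ fD = m₂ ≫ c₁ := hD.lift_fst _ _ _
  have hj₂f : j₂ ≫ fD = m₂ ≫ c₂ := hD.lift_fst _ _ _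
  have hj₁s : j₁ ≫ sD = 𝟙 A₂ := hD.lift_snd _ _ _
  have hj₂s : j₂ ≫ sD = 𝟙 A₂ := hD.lift_snd _ _ _
  -- ψ is inverse to φ
  have hψk : ψ ≫ k = fD := by
    apply OUT.hom_ext
    · rw [← Category.assoc, hs1ψ]
      calc (s1 ≫ sD ≫ d₁) ≫ k = s1 ≫ sD ≫ d₁ ≫ k := by
            rw [Category.assoc, Category.assoc]
      _ = s1 ≫ sD ≫ m₂ ≫ c₁ := by rw [hd₁k]
      _ = (s1 ≫ sD ≫ m₂) ≫ c₁ := by rw [Category.assoc, Category.assoc]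
      _ = f1 ≫ c₁ := by rw [← key1]
      _ = s1 ≫ fD := hP1.w
    · rw [← Category.assoc, hs2ψ]
      calc (s2 ≫ sD ≫ d₂) ≫ k = s2 ≫ sD ≫ d₂ ≫ k := by
            rw [Category.assoc, Category.assoc]
      _ = s2 ≫ sD ≫ m₂ ≫ c₂ := by rw [hd₂k]
      _ = (s2 ≫ sD ≫ m₂) ≫ c₂ := by rw [Category.assoc, Category.assoc]
      _ = f2 ≫ c₂ := by rw [← key2]
      _ = s2 ≫ fD := hP2.w
  have hψdl : ψ ≫ dl = sD := by
    apply OUT.hom_ext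
    · rw [← Category.assoc, hs1ψ]
      rw [Category.assoc, Category.assoc, hd₁dl, Category.comp_id]
    · rw [← Category.assoc, hs2ψ]
      rw [Category.assoc, Category.assoc, hd₂dl, Category.comp_id]
  have hφfD : φ ≫ fD = k := by
    apply hCP₂.hom_ext
    · rw [← Category.assoc, hd₁φ, hj₁f, hd₁k]
    · rw [← Category.assoc, hd₂φ, hj₂f, hd₂k]
  have hφsD : φ ≫ sD = dl := by
    apply hCP₂.hom_ext
    · rw [← Category.assoc, hd₁φ, hj₁s, hd₁dl]
    · rw [← Category.assoc, hd₂φ, hj₂s, hd₂dl]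
  have hφψ : φ ≫ ψ = 𝟙 D := by
    apply hCP₂.hom_ext
    · have hϱ₁w : m₂ ≫ c₁ = j₁ ≫ fD := hj₁f.symm
      have hϱ₁ : hP1.lift m₂ j₁ hϱ₁w ≫ s1 = j₁ := hP1.lift_snd _ _ _
      rw [← Category.assoc, hd₁φ, Category.comp_id, ← hϱ₁, Category.assoc, hs1ψ,
        ← Category.assoc, hϱ₁, ← Category.assoc, hj₁s, Category.id_comp]
    · have hϱ₂w : m₂ ≫ c₂ = j₂ ≫ fD := hj₂f.symm
      have hϱ₂ : hP2.lift m₂ j₂ hϱ₂w ≫ s2 = j₂ := hP2.lift_snd _ _ _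
      rw [← Category.assoc, hd₂φ, Category.comp_id, ← hϱ₂, Category.assoc, hs2ψ,
        ← Category.assoc, hϱ₂, ← Category.assoc, hj₂s, Category.id_comp]
  have hψφ : ψ ≫ φ = 𝟙 D'' := by
    apply OUT.hom_ext
    · rw [← Category.assoc, hs1ψ, Category.comp_id]
      apply hD.hom_ext
      · calc ((s1 ≫ sD ≫ d₁) ≫ φ) ≫ fD = s1 ≫ sD ≫ d₁ ≫ φ ≫ fD := by
              simp only [Category.assoc]
          _ = s1 ≫ sD ≫ j₁ ≫ fD := by rw [← Category.assoc d₁ φ fD, hd₁φ]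
          _ = (s1 ≫ sD ≫ m₂) ≫ c₁ := by rw [hj₁f]; simp only [Category.assoc]
          _ = f1 ≫ c₁ := by rw [← key1]
          _ = s1 ≫ fD := hP1.w
      · calc ((s1 ≫ sD ≫ d₁) ≫ φ) ≫ sD = s1 ≫ sD ≫ d₁ ≫ φ ≫ sD := by
              simp only [Category.assoc]
          _ = s1 ≫ sD ≫ j₁ ≫ sD := by rw [← Category.assoc d₁ φ sD, hd₁φ]
          _ = s1 ≫ sD := by rw [hj₁s, Category.comp_id]
    · rw [← Category.assoc, hs2ψ, Category.comp_id]
      apply hD.hom_ext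
      · calc ((s2 ≫ sD ≫ d₂) ≫ φ) ≫ fD = s2 ≫ sD ≫ d₂ ≫ φ ≫ fD := by
              simp only [Category.assoc]
          _ = s2 ≫ sD ≫ j₂ ≫ fD := by rw [← Category.assoc d₂ φ fD, hd₂φ]
          _ = (s2 ≫ sD ≫ m₂) ≫ c₂ := by rw [hj₂f]; simp only [Category.assoc]
          _ = f2 ≫ c₂ := by rw [← key2]
          _ = s2 ≫ fD := hP2.w
      · calc ((s2 ≫ sD ≫ d₂) ≫ φ) ≫ sD = s2 ≫ sD ≫ d₂ ≫ φ ≫ sD := by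
              simp only [Category.assoc]
          _ = s2 ≫ sD ≫ j₂ ≫ sD := by rw [← Category.assoc d₂ φ sD, hd₂φ]
          _ = s2 ≫ sD := by rw [hj₂s, Category.comp_id]
  -- k is the pullback of m₂ along the codiagonal dc
  have comm : k ≫ dc = dl ≫ m₂ := by
    apply hCP₂.hom_ext
    · rw [← Category.assoc, hd₁k, ← Category.assoc, hd₁dl, Category.assoc, hc₁dc,
        Category.comp_id, Category.id_comp]
    · rw [← Category.assoc, hd₂k, ← Category.assoc, hd₂dl, Category.assoc, hc₂dc,
        Category.comp_id, Category.id_comp]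
  have isLim : IsLimit (PullbackCone.mk k dl comm) := by
    refine PullbackCone.IsLimit.mk comm (fun s => hD.lift s.fst s.snd s.condition ≫ ψ)
      (fun s => ?_) (fun s => ?_) (fun s t ht₁ ht₂ => ?_)
    · rw [Category.assoc, hψk, hD.lift_fst]
    · rw [Category.assoc, hψdl, hD.lift_snd]
    · have : t ≫ φ = hD.lift s.fst s.snd s.condition := by
        apply hD.hom_ext
        · rw [Category.assoc, hφfD, hD.lift_fst, ht₁]
        · rw [Category.assoc, hφsD, hD.lift_snd, ht₂]
      calc t = t ≫ φ ≫ ψ := by rw [hφψ, Category.comp_id]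
        _ = (t ≫ φ) ≫ ψ := by rw [Category.assoc]
        _ = hD.lift s.fst s.snd s.condition ≫ ψ := by rw [this]
  exact ⟨regularOfIsPullbackFstOfRegular hm₂ comm isLim⟩

/-- The comparison map `e` into the regular-mono part of the factorization is a stable epi. -/
lemma stableEpi_aux [HasPullbacks C] {X A₁ A₂ P Q C₁ D Z I : C}
    {m₁ : A₁ ⟶ X} {m₂ : A₂ ⟶ X} {p₂ : P ⟶ A₂} {q₁ : A₁ ⟶ Q} {q₂ : A₂ ⟶ Q} {m : Q ⟶ X}
    {c₁ c₂ : X ⟶ C₁} (hCP₁ : IsPushout m₁ m₁ c₁ c₂) (hst₁ : IsStablePushout hCP₁)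
    {d₁ d₂ : A₂ ⟶ D} (hCP₂ : IsPushout p₂ p₂ d₁ d₂) (hst₂ : IsStablePushout hCP₂)
    {k : D ⟶ C₁} {dl : D ⟶ A₂} {ζ : C₁ ⟶ Z} {θ : A₂ ⟶ Z}
    (sqZ : IsPushout k dl ζ θ) (hstZ : IsStablePushout sqZ)
    (hd₁k : d₁ ≫ k = m₂ ≫ c₁) (hd₂k : d₂ ≫ k = m₂ ≫ c₂)
    (hd₁dl : d₁ ≫ dl = 𝟙 A₂) (hd₂dl : d₂ ≫ dl = 𝟙 A₂)
    {n : I ⟶ X} {e : Q ⟶ I} (he : e ≫ n = m) (hmono : Mono n) (hα : Mono (c₁ ≫ ζ))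
    (hq₁m : q₁ ≫ m = m₁) (hq₂m : q₂ ≫ m = m₂)
    (hθα : θ = m₂ ≫ c₁ ≫ ζ) (hβθ : m₂ ≫ c₂ ≫ ζ = θ)
    (hnαβ : n ≫ c₁ ≫ ζ = n ≫ c₂ ≫ ζ) :
    StableEpi e := by
  intro Q' I' e' a b HPB
  refine ⟨fun {V} u v huv => ?_⟩
  -- the pullbacks of the square `sqZ` along ω := b ≫ n ≫ c₁ ≫ ζ
  obtain ⟨VC, fVC, sVC, hVC⟩ : ∃ (VC : C) (fVC : VC ⟶ C₁) (sVC : VC ⟶ I'),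
      IsPullback fVC sVC ζ (b ≫ n ≫ c₁ ≫ ζ) :=
    ⟨_, _, _, IsPullback.of_hasPullback _ _⟩
  obtain ⟨VA, fVA, sVA, hVA⟩ : ∃ (VA : C) (fVA : VA ⟶ A₂) (sVA : VA ⟶ I'),
      IsPullback fVA sVA θ (b ≫ n ≫ c₁ ≫ ζ) :=
    ⟨_, _, _, IsPullback.of_hasPullback _ _⟩
  obtain ⟨VD, fVD, sVD, hVD⟩ : ∃ (VD : C) (fVD : VD ⟶ D) (sVD : VD ⟶ I'),
      IsPullback fVD sVD (k ≫ ζ) (b ≫ n ≫ c₁ ≫ ζ) :=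
    ⟨_, _, _, IsPullback.of_hasPullback _ _⟩
  have ewC : (fVD ≫ k) ≫ ζ = sVD ≫ (b ≫ n ≫ c₁ ≫ ζ) := by
    rw [Category.assoc]; exact hVD.w
  have ewA : (fVD ≫ dl) ≫ θ = sVD ≫ (b ≫ n ≫ c₁ ≫ ζ) := by
    rw [Category.assoc, ← sqZ.w]; exact hVD.w
  obtain ⟨wC, hwC1, hwC2⟩ : ∃ wC : VD ⟶ VC, wC ≫ fVC = fVD ≫ k ∧ wC ≫ sVC = sVD :=
    ⟨hVC.lift (fVD ≫ k) sVD ewC, hVC.lift_fst _ _ _, hVC.lift_snd _ _ _⟩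
  obtain ⟨wA, hwA1, hwA2⟩ : ∃ wA : VD ⟶ VA, wA ≫ fVA = fVD ≫ dl ∧ wA ≫ sVA = sVD :=
    ⟨hVA.lift (fVD ≫ dl) sVD ewA, hVA.lift_fst _ _ _, hVA.lift_snd _ _ _⟩
  have OUT1 : IsPushout wC wA sVC sVA :=
    pbcube' sqZ hstZ hVC hVA hVD wC wA hwC1 hwC2 hwA1 hwA2
  -- the two canonical sections κ₁ κ₂ : I' ⟶ VC
  have eκ₁ : (b ≫ n ≫ c₁) ≫ ζ = 𝟙 I' ≫ (b ≫ n ≫ c₁ ≫ ζ) := by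
    rw [Category.id_comp]; simp only [Category.assoc]
  have eκ₂ : (b ≫ n ≫ c₂) ≫ ζ = 𝟙 I' ≫ (b ≫ n ≫ c₁ ≫ ζ) := by
    rw [Category.id_comp]; simp only [Category.assoc]; rw [← hnαβ]
  obtain ⟨κ₁, hκ₁f, hκ₁s⟩ : ∃ κ₁ : I' ⟶ VC, κ₁ ≫ fVC = b ≫ n ≫ c₁ ∧ κ₁ ≫ sVC = 𝟙 I' :=
    ⟨hVC.lift _ _ eκ₁, hVC.lift_fst _ _ _, hVC.lift_snd _ _ _⟩
  obtain ⟨κ₂, hκ₂f, hκ₂s⟩ : ∃ κ₂ : I' ⟶ VC, κ₂ ≫ fVC = b ≫ n ≫ c₂ ∧ κ₂ ≫ sVC = 𝟙 I' :=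
    ⟨hVC.lift _ _ eκ₂, hVC.lift_fst _ _ _, hVC.lift_snd _ _ _⟩
  -- `VA` is the pullback of m₂ along b ≫ n
  have hVAm : fVA ≫ m₂ = sVA ≫ b ≫ n := by
    apply hα.right_cancellation
    calc (fVA ≫ m₂) ≫ c₁ ≫ ζ = fVA ≫ θ := by rw [hθα]; simp only [Category.assoc]
      _ = sVA ≫ b ≫ n ≫ c₁ ≫ ζ := hVA.w
      _ = (sVA ≫ b ≫ n) ≫ c₁ ≫ ζ := by simp only [Category.assoc]
  -- sVA factors through e', hence u and v agree after composing with sVA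
  have eℓ₂ : (fVA ≫ q₂) ≫ e = sVA ≫ b := by
    apply hmono.right_cancellation
    calc ((fVA ≫ q₂) ≫ e) ≫ n = fVA ≫ q₂ ≫ m := by
          simp only [Category.assoc]; rw [he]
      _ = fVA ≫ m₂ := by rw [hq₂m]
      _ = sVA ≫ b ≫ n := hVAm
      _ = (sVA ≫ b) ≫ n := by rw [Category.assoc]
  have hγA : sVA ≫ u = sVA ≫ v := by
    have h2 : HPB.lift (fVA ≫ q₂) sVA eℓ₂ ≫ e' = sVA := HPB.lift_snd _ _ _
    calc sVA ≫ u = HPB.lift (fVA ≫ q₂) sVA eℓ₂ ≫ e' ≫ u := by rw [← Category.assoc, h2]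
      _ = HPB.lift (fVA ≫ q₂) sVA eℓ₂ ≫ e' ≫ v := by rw [huv]
      _ = sVA ≫ v := by rw [← Category.assoc, h2]
  -- pieces of the cokernel pair of m₁ pulled back along fVC
  obtain ⟨P1, f1, s1, hP1⟩ : ∃ (P1 : C) (f1 : P1 ⟶ X) (s1 : P1 ⟶ VC),
      IsPullback f1 s1 c₁ fVC := ⟨_, _, _, IsPullback.of_hasPullback c₁ fVC⟩
  obtain ⟨P2, f2, s2, hP2⟩ : ∃ (P2 : C) (f2 : P2 ⟶ X) (s2 : P2 ⟶ VC),
      IsPullback f2 s2 c₂ fVC := ⟨_, _, _, IsPullback.of_hasPullback c₂ fVC⟩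
  obtain ⟨PW, fW, sW, hPW⟩ : ∃ (PW : C) (fW : PW ⟶ A₁) (sW : PW ⟶ VC),
      IsPullback fW sW (m₁ ≫ c₁) fVC := ⟨_, _, _, IsPullback.of_hasPullback (m₁ ≫ c₁) fVC⟩
  have e1 : (fW ≫ m₁) ≫ c₁ = sW ≫ fVC := by rw [Category.assoc]; exact hPW.w
  have e2 : (fW ≫ m₁) ≫ c₂ = sW ≫ fVC := by rw [Category.assoc, ← hCP₁.w]; exact hPW.w
  obtain ⟨w1, hw11, hw12⟩ : ∃ w1 : PW ⟶ P1, w1 ≫ f1 = fW ≫ m₁ ∧ w1 ≫ s1 = sW :=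
    ⟨hP1.lift _ _ e1, hP1.lift_fst _ _ _, hP1.lift_snd _ _ _⟩
  obtain ⟨w2, hw21, hw22⟩ : ∃ w2 : PW ⟶ P2, w2 ≫ f2 = fW ≫ m₁ ∧ w2 ≫ s2 = sW :=
    ⟨hP2.lift _ _ e2, hP2.lift_fst _ _ _, hP2.lift_snd _ _ _⟩
  have OUT2 : IsPushout w1 w2 s1 s2 :=
    pbcube' hCP₁ hst₁ hP1 hP2 hPW w1 w2 hw11 hw12 hw21 hw22
  -- the two sections of s1, s2
  obtain ⟨σ₁, hσ₁⟩ : ∃ σ₁ : I' ⟶ P1, σ₁ ≫ s1 = κ₁ := by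
    refine ⟨hP1.lift (b ≫ n) κ₁ ?_, hP1.lift_snd _ _ _⟩
    rw [hκ₁f]; simp only [Category.assoc]
  obtain ⟨σ₂, hσ₂⟩ : ∃ σ₂ : I' ⟶ P2, σ₂ ≫ s2 = κ₂ := by
    refine ⟨hP2.lift (b ≫ n) κ₂ ?_, hP2.lift_snd _ _ _⟩
    rw [hκ₂f]; simp only [Category.assoc]
  -- the middle piece PW factors through e'
  have hWμ : fW ≫ m₁ = (sW ≫ sVC) ≫ b ≫ n := by
    apply hα.right_cancellation
    calc (fW ≫ m₁) ≫ c₁ ≫ ζ = ((fW ≫ m₁) ≫ c₁) ≫ ζ := by simp only [Category.assoc]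
      _ = (sW ≫ fVC) ≫ ζ := by rw [e1]
      _ = sW ≫ sVC ≫ b ≫ n ≫ c₁ ≫ ζ := by rw [Category.assoc, hVC.w]
      _ = ((sW ≫ sVC) ≫ b ≫ n) ≫ c₁ ≫ ζ := by simp only [Category.assoc]
  have eℓ₁ : (fW ≫ q₁) ≫ e = (sW ≫ sVC) ≫ b := by
    apply hmono.right_cancellation
    calc ((fW ≫ q₁) ≫ e) ≫ n = fW ≫ q₁ ≫ m := by simp only [Category.assoc]; rw [he]
      _ = fW ≫ m₁ := by rw [hq₁m]
      _ = (sW ≫ sVC) ≫ b ≫ n := hWμ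
      _ = ((sW ≫ sVC) ≫ b) ≫ n := by simp only [Category.assoc]
  have hμ : (sW ≫ sVC) ≫ u = (sW ≫ sVC) ≫ v := by
    have h2 : HPB.lift (fW ≫ q₁) (sW ≫ sVC) eℓ₁ ≫ e' = sW ≫ sVC := HPB.lift_snd _ _ _
    calc (sW ≫ sVC) ≫ u = HPB.lift (fW ≫ q₁) (sW ≫ sVC) eℓ₁ ≫ e' ≫ u := by
          rw [← Category.assoc, h2]
      _ = HPB.lift (fW ≫ q₁) (sW ≫ sVC) eℓ₁ ≫ e' ≫ v := by rw [huv]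
      _ = (sW ≫ sVC) ≫ v := by rw [← Category.assoc, h2]
  -- the descent map χ
  have wχ : w1 ≫ ((s1 ≫ sVC) ≫ u) = w2 ≫ ((s2 ≫ sVC) ≫ v) := by
    calc w1 ≫ (s1 ≫ sVC) ≫ u = (w1 ≫ s1) ≫ sVC ≫ u := by simp only [Category.assoc]
      _ = (sW ≫ sVC) ≫ u := by rw [hw12, Category.assoc]
      _ = (sW ≫ sVC) ≫ v := hμ
      _ = (w2 ≫ s2) ≫ sVC ≫ v := by rw [hw22, Category.assoc]
      _ = w2 ≫ (s2 ≫ sVC) ≫ v := by simp only [Category.assoc]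
  obtain ⟨χ, hχl, hχr⟩ : ∃ χ : VC ⟶ V, s1 ≫ χ = (s1 ≫ sVC) ≫ u ∧ s2 ≫ χ = (s2 ≫ sVC) ≫ v :=
    ⟨OUT2.desc _ _ wχ, OUT2.inl_desc _ _ _, OUT2.inr_desc _ _ _⟩
  have hχ₁ : κ₁ ≫ χ = u := by
    calc κ₁ ≫ χ = σ₁ ≫ s1 ≫ χ := by rw [← Category.assoc, hσ₁]
      _ = σ₁ ≫ (s1 ≫ sVC) ≫ u := by rw [hχl]
      _ = (σ₁ ≫ s1) ≫ sVC ≫ u := by simp only [Category.assoc]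
      _ = (κ₁ ≫ sVC) ≫ u := by rw [hσ₁, Category.assoc]
      _ = u := by rw [hκ₁s, Category.id_comp]
  have hχ₂ : κ₂ ≫ χ = v := by
    calc κ₂ ≫ χ = σ₂ ≫ s2 ≫ χ := by rw [← Category.assoc, hσ₂]
      _ = σ₂ ≫ (s2 ≫ sVC) ≫ v := by rw [hχr]
      _ = (σ₂ ≫ s2) ≫ sVC ≫ v := by simp only [Category.assoc]
      _ = (κ₂ ≫ sVC) ≫ v := by rw [hσ₂, Category.assoc]
      _ = v := by rw [hκ₂s, Category.id_comp]
  -- pieces of the cokernel pair of p₂ pulled back along fVD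
  obtain ⟨QA1, g1, t1, hA1⟩ : ∃ (QA1 : C) (g1 : QA1 ⟶ A₂) (t1 : QA1 ⟶ VD),
      IsPullback g1 t1 d₁ fVD := ⟨_, _, _, IsPullback.of_hasPullback d₁ fVD⟩
  obtain ⟨QA2, g2, t2, hA2⟩ : ∃ (QA2 : C) (g2 : QA2 ⟶ A₂) (t2 : QA2 ⟶ VD),
      IsPullback g2 t2 d₂ fVD := ⟨_, _, _, IsPullback.of_hasPullback d₂ fVD⟩
  obtain ⟨QAP, gP, tP, hAP⟩ : ∃ (QAP : C) (gP : QAP ⟶ P) (tP : QAP ⟶ VD),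
      IsPullback gP tP (p₂ ≫ d₁) fVD := ⟨_, _, _, IsPullback.of_hasPullback (p₂ ≫ d₁) fVD⟩
  have ey1 : (gP ≫ p₂) ≫ d₁ = tP ≫ fVD := by rw [Category.assoc]; exact hAP.w
  have ey2 : (gP ≫ p₂) ≫ d₂ = tP ≫ fVD := by rw [Category.assoc, ← hCP₂.w]; exact hAP.w
  obtain ⟨y1, hy11, hy12⟩ : ∃ y1 : QAP ⟶ QA1, y1 ≫ g1 = gP ≫ p₂ ∧ y1 ≫ t1 = tP :=
    ⟨hA1.lift _ _ ey1, hA1.lift_fst _ _ _, hA1.lift_snd _ _ _⟩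
  obtain ⟨y2, hy21, hy22⟩ : ∃ y2 : QAP ⟶ QA2, y2 ≫ g2 = gP ≫ p₂ ∧ y2 ≫ t2 = tP :=
    ⟨hA2.lift _ _ ey2, hA2.lift_fst _ _ _, hA2.lift_snd _ _ _⟩
  have OUT3 : IsPushout y1 y2 t1 t2 :=
    pbcube' hCP₂ hst₂ hA1 hA2 hAP y1 y2 hy11 hy12 hy21 hy22
  -- the diagonal maps δ₁ δ₂ : VA ⟶ VD and retractions ρ₁ ρ₂
  have eδ₁ : (fVA ≫ d₁) ≫ k ≫ ζ = sVA ≫ (b ≫ n ≫ c₁ ≫ ζ) := by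
    calc (fVA ≫ d₁) ≫ k ≫ ζ = fVA ≫ (d₁ ≫ k) ≫ ζ := by simp only [Category.assoc]
      _ = fVA ≫ m₂ ≫ c₁ ≫ ζ := by rw [hd₁k]; simp only [Category.assoc]
      _ = fVA ≫ θ := by rw [hθα]
      _ = sVA ≫ b ≫ n ≫ c₁ ≫ ζ := hVA.w
  have eδ₂ : (fVA ≫ d₂) ≫ k ≫ ζ = sVA ≫ (b ≫ n ≫ c₁ ≫ ζ) := by
    calc (fVA ≫ d₂) ≫ k ≫ ζ = fVA ≫ (d₂ ≫ k) ≫ ζ := by simp only [Category.assoc]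
      _ = fVA ≫ m₂ ≫ c₂ ≫ ζ := by rw [hd₂k]; simp only [Category.assoc]
      _ = fVA ≫ θ := by rw [hβθ]
      _ = sVA ≫ b ≫ n ≫ c₁ ≫ ζ := hVA.w
  obtain ⟨δ₁, hδ₁f, hδ₁s⟩ : ∃ δ₁ : VA ⟶ VD, δ₁ ≫ fVD = fVA ≫ d₁ ∧ δ₁ ≫ sVD = sVA :=
    ⟨hVD.lift _ _ eδ₁, hVD.lift_fst _ _ _, hVD.lift_snd _ _ _⟩
  obtain ⟨δ₂, hδ₂f, hδ₂s⟩ : ∃ δ₂ : VA ⟶ VD, δ₂ ≫ fVD = fVA ≫ d₂ ∧ δ₂ ≫ sVD = sVA :=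
    ⟨hVD.lift _ _ eδ₂, hVD.lift_fst _ _ _, hVD.lift_snd _ _ _⟩
  have eρ₁ : g1 ≫ θ = (t1 ≫ sVD) ≫ (b ≫ n ≫ c₁ ≫ ζ) := by
    calc g1 ≫ θ = g1 ≫ m₂ ≫ c₁ ≫ ζ := by rw [hθα]
      _ = g1 ≫ (d₁ ≫ k) ≫ ζ := by rw [hd₁k]; simp only [Category.assoc]
      _ = (g1 ≫ d₁) ≫ k ≫ ζ := by simp only [Category.assoc]
      _ = (t1 ≫ fVD) ≫ k ≫ ζ := by rw [hA1.w]
      _ = t1 ≫ fVD ≫ k ≫ ζ := by simp only [Category.assoc]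
      _ = t1 ≫ sVD ≫ (b ≫ n ≫ c₁ ≫ ζ) := by rw [hVD.w]
      _ = (t1 ≫ sVD) ≫ (b ≫ n ≫ c₁ ≫ ζ) := by simp only [Category.assoc]
  have eρ₂ : g2 ≫ θ = (t2 ≫ sVD) ≫ (b ≫ n ≫ c₁ ≫ ζ) := by
    calc g2 ≫ θ = g2 ≫ m₂ ≫ c₂ ≫ ζ := by rw [hβθ]
      _ = g2 ≫ (d₂ ≫ k) ≫ ζ := by rw [hd₂k]; simp only [Category.assoc]
      _ = (g2 ≫ d₂) ≫ k ≫ ζ := by simp only [Category.assoc]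
      _ = (t2 ≫ fVD) ≫ k ≫ ζ := by rw [hA2.w]
      _ = t2 ≫ fVD ≫ k ≫ ζ := by simp only [Category.assoc]
      _ = t2 ≫ sVD ≫ (b ≫ n ≫ c₁ ≫ ζ) := by rw [hVD.w]
      _ = (t2 ≫ sVD) ≫ (b ≫ n ≫ c₁ ≫ ζ) := by simp only [Category.assoc]
  obtain ⟨ρ₁, hρ₁f, hρ₁s⟩ : ∃ ρ₁ : QA1 ⟶ VA, ρ₁ ≫ fVA = g1 ∧ ρ₁ ≫ sVA = t1 ≫ sVD :=
    ⟨hVA.lift _ _ eρ₁, hVA.lift_fst _ _ _, hVA.lift_snd _ _ _⟩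
  obtain ⟨ρ₂, hρ₂f, hρ₂s⟩ : ∃ ρ₂ : QA2 ⟶ VA, ρ₂ ≫ fVA = g2 ∧ ρ₂ ≫ sVA = t2 ≫ sVD :=
    ⟨hVA.lift _ _ eρ₂, hVA.lift_fst _ _ _, hVA.lift_snd _ _ _⟩
  have hρδ₁ : ρ₁ ≫ δ₁ = t1 := by
    apply hVD.hom_ext
    · calc (ρ₁ ≫ δ₁) ≫ fVD = ρ₁ ≫ fVA ≫ d₁ := by rw [Category.assoc, hδ₁f]
        _ = g1 ≫ d₁ := by rw [← Category.assoc, hρ₁f]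
        _ = t1 ≫ fVD := hA1.w
    · rw [Category.assoc, hδ₁s, hρ₁s]
  have hρδ₂ : ρ₂ ≫ δ₂ = t2 := by
    apply hVD.hom_ext
    · calc (ρ₂ ≫ δ₂) ≫ fVD = ρ₂ ≫ fVA ≫ d₂ := by rw [Category.assoc, hδ₂f]
        _ = g2 ≫ d₂ := by rw [← Category.assoc, hρ₂f]
        _ = t2 ≫ fVD := hA2.w
    · rw [Category.assoc, hδ₂s, hρ₂s]
  have hδwC₁ : δ₁ ≫ wC = sVA ≫ κ₁ := by
    apply hVC.hom_ext
    · calc (δ₁ ≫ wC) ≫ fVC = δ₁ ≫ fVD ≫ k := by rw [Category.assoc, hwC1]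
        _ = (fVA ≫ d₁) ≫ k := by rw [← Category.assoc, hδ₁f]
        _ = fVA ≫ m₂ ≫ c₁ := by rw [Category.assoc, hd₁k]
        _ = (fVA ≫ m₂) ≫ c₁ := by rw [Category.assoc]
        _ = (sVA ≫ b ≫ n) ≫ c₁ := by rw [hVAm]
        _ = sVA ≫ b ≫ n ≫ c₁ := by simp only [Category.assoc]
        _ = (sVA ≫ κ₁) ≫ fVC := by rw [Category.assoc, hκ₁f]
    · rw [Category.assoc, hwC2, hδ₁s, Category.assoc, hκ₁s, Category.comp_id]
  have hδwC₂ : δ₂ ≫ wC = sVA ≫ κ₂ := by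
    apply hVC.hom_ext
    · calc (δ₂ ≫ wC) ≫ fVC = δ₂ ≫ fVD ≫ k := by rw [Category.assoc, hwC1]
        _ = (fVA ≫ d₂) ≫ k := by rw [← Category.assoc, hδ₂f]
        _ = fVA ≫ m₂ ≫ c₂ := by rw [Category.assoc, hd₂k]
        _ = (fVA ≫ m₂) ≫ c₂ := by rw [Category.assoc]
        _ = (sVA ≫ b ≫ n) ≫ c₂ := by rw [hVAm]
        _ = sVA ≫ b ≫ n ≫ c₂ := by simp only [Category.assoc]
        _ = (sVA ≫ κ₂) ≫ fVC := by rw [Category.assoc, hκ₂f]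
    · rw [Category.assoc, hwC2, hδ₂s, Category.assoc, hκ₂s, Category.comp_id]
  have hδwA₁ : δ₁ ≫ wA = 𝟙 VA := by
    apply hVA.hom_ext
    · calc (δ₁ ≫ wA) ≫ fVA = δ₁ ≫ fVD ≫ dl := by rw [Category.assoc, hwA1]
        _ = (fVA ≫ d₁) ≫ dl := by rw [← Category.assoc, hδ₁f]
        _ = fVA := by rw [Category.assoc, hd₁dl, Category.comp_id]
        _ = 𝟙 VA ≫ fVA := by rw [Category.id_comp]
    · rw [Category.assoc, hwA2, hδ₁s, Category.id_comp]
  have hδwA₂ : δ₂ ≫ wA = 𝟙 VA := by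
    apply hVA.hom_ext
    · calc (δ₂ ≫ wA) ≫ fVA = δ₂ ≫ fVD ≫ dl := by rw [Category.assoc, hwA1]
        _ = (fVA ≫ d₂) ≫ dl := by rw [← Category.assoc, hδ₂f]
        _ = fVA := by rw [Category.assoc, hd₂dl, Category.comp_id]
        _ = 𝟙 VA ≫ fVA := by rw [Category.id_comp]
    · rw [Category.assoc, hwA2, hδ₂s, Category.id_comp]
  -- the key compatibility, checked on the pieces of OUT3
  have hw : wC ≫ χ = wA ≫ sVA ≫ u := by
    apply OUT3.hom_ext
    · calc t1 ≫ wC ≫ χ = (ρ₁ ≫ δ₁) ≫ wC ≫ χ := by rw [hρδ₁]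
        _ = ρ₁ ≫ (δ₁ ≫ wC) ≫ χ := by simp only [Category.assoc]
        _ = ρ₁ ≫ (sVA ≫ κ₁) ≫ χ := by rw [hδwC₁]
        _ = ρ₁ ≫ sVA ≫ κ₁ ≫ χ := by simp only [Category.assoc]
        _ = ρ₁ ≫ sVA ≫ u := by rw [hχ₁]
        _ = ρ₁ ≫ (δ₁ ≫ wA) ≫ sVA ≫ u := by rw [hδwA₁, Category.id_comp]
        _ = (ρ₁ ≫ δ₁) ≫ wA ≫ sVA ≫ u := by simp only [Category.assoc]
        _ = t1 ≫ wA ≫ sVA ≫ u := by rw [hρδ₁]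
    · calc t2 ≫ wC ≫ χ = (ρ₂ ≫ δ₂) ≫ wC ≫ χ := by rw [hρδ₂]
        _ = ρ₂ ≫ (δ₂ ≫ wC) ≫ χ := by simp only [Category.assoc]
        _ = ρ₂ ≫ (sVA ≫ κ₂) ≫ χ := by rw [hδwC₂]
        _ = ρ₂ ≫ sVA ≫ κ₂ ≫ χ := by simp only [Category.assoc]
        _ = ρ₂ ≫ sVA ≫ v := by rw [hχ₂]
        _ = ρ₂ ≫ sVA ≫ u := by rw [hγA]
        _ = ρ₂ ≫ (δ₂ ≫ wA) ≫ sVA ≫ u := by rw [hδwA₂, Category.id_comp]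
        _ = (ρ₂ ≫ δ₂) ≫ wA ≫ sVA ≫ u := by simp only [Category.assoc]
        _ = t2 ≫ wA ≫ sVA ≫ u := by rw [hρδ₂]
  -- conclude
  have hΦ : sVC ≫ OUT1.desc χ (sVA ≫ u) hw = χ := OUT1.inl_desc _ _ _
  calc u = κ₁ ≫ χ := hχ₁.symm
    _ = κ₁ ≫ sVC ≫ OUT1.desc χ (sVA ≫ u) hw := by rw [hΦ]
    _ = (κ₁ ≫ sVC) ≫ OUT1.desc χ (sVA ≫ u) hw := by rw [Category.assoc]
    _ = OUT1.desc χ (sVA ≫ u) hw := by rw [hκ₁s, Category.id_comp]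
    _ = (κ₂ ≫ sVC) ≫ OUT1.desc χ (sVA ≫ u) hw := by rw [hκ₂s, Category.id_comp]
    _ = κ₂ ≫ sVC ≫ OUT1.desc χ (sVA ≫ u) hw := by rw [Category.assoc]
    _ = κ₂ ≫ χ := by rw [hΦ]
    _ = v := hχ₂

/-- In an rm-quasiadhesive category, the union of two regular subobjects
(the induced map out of the pushout over their intersection) factors as a
stable epimorphism followed by a regular monomorphism. -/
theorem union_stable_epi_regularMono_factorization [HasPullbacks C]
    (hC : RmQuasiadhesive C)
    {X A₁ A₂ P Q : C} (m₁ : A₁ ⟶ X) (m₂ : A₂ ⟶ X)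
    (hm₁ : RegularMono m₁) (hm₂ : RegularMono m₂)
    (p₁ : P ⟶ A₁) (p₂ : P ⟶ A₂) (hpb : IsPullback p₁ p₂ m₁ m₂)
    (q₁ : A₁ ⟶ Q) (q₂ : A₂ ⟶ Q) (hpo : IsPushout p₁ p₂ q₁ q₂)
    (m : Q ⟶ X) (hm₁' : q₁ ≫ m = m₁) (hm₂' : q₂ ≫ m = m₂) :
    ∃ (I : C) (e : Q ⟶ I) (n : I ⟶ X),
      e ≫ n = m ∧ StableEpi e ∧ Nonempty (RegularMono n) := by
  obtain ⟨hPO, hSt⟩ := hC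
  haveI := hm₁
  haveI := hm₂
  have hp₂ : RegularMono p₂ := regularOfIsPullbackSndOfRegular hm₁ hpb.w hpb.isLimit
  -- the cokernel pair of m₁
  obtain ⟨C₁, c₁, c₂, hCP₁, hst₁⟩ :
      ∃ (C₁ : C) (c₁ c₂ : X ⟶ C₁) (H : IsPushout m₁ m₁ c₁ c₂), IsStablePushout H := by
    haveI := hPO m₁ m₁ hm₁
    exact ⟨_, _, _, IsPushout.of_hasPushout m₁ m₁,
      (hSt m₁ m₁ _ _ hm₁ (IsPushout.of_hasPushout m₁ m₁)).1⟩
  -- the cokernel pair of p₂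
  obtain ⟨D, d₁, d₂, hCP₂, hst₂⟩ :
      ∃ (D : C) (d₁ d₂ : A₂ ⟶ D) (H : IsPushout p₂ p₂ d₁ d₂), IsStablePushout H := by
    haveI := hPO p₂ p₂ hp₂
    exact ⟨_, _, _, IsPushout.of_hasPushout p₂ p₂,
      (hSt p₂ p₂ _ _ hp₂ (IsPushout.of_hasPushout p₂ p₂)).1⟩
  -- codiagonals
  obtain ⟨dc, hc₁dc, hc₂dc⟩ : ∃ dc : C₁ ⟶ X, c₁ ≫ dc = 𝟙 X ∧ c₂ ≫ dc = 𝟙 X :=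
    ⟨hCP₁.desc (𝟙 X) (𝟙 X) rfl, hCP₁.inl_desc _ _ _, hCP₁.inr_desc _ _ _⟩
  obtain ⟨dl, hd₁dl, hd₂dl⟩ : ∃ dl : D ⟶ A₂, d₁ ≫ dl = 𝟙 A₂ ∧ d₂ ≫ dl = 𝟙 A₂ :=
    ⟨hCP₂.desc (𝟙 A₂) (𝟙 A₂) rfl, hCP₂.inl_desc _ _ _, hCP₂.inr_desc _ _ _⟩
  -- the comparison map k
  have wk : p₂ ≫ (m₂ ≫ c₁) = p₂ ≫ (m₂ ≫ c₂) := by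
    calc p₂ ≫ m₂ ≫ c₁ = (p₂ ≫ m₂) ≫ c₁ := by rw [Category.assoc]
      _ = (p₁ ≫ m₁) ≫ c₁ := by rw [hpb.w]
      _ = p₁ ≫ m₁ ≫ c₁ := by rw [Category.assoc]
      _ = p₁ ≫ m₁ ≫ c₂ := by rw [hCP₁.w]
      _ = (p₁ ≫ m₁) ≫ c₂ := by rw [Category.assoc]
      _ = (p₂ ≫ m₂) ≫ c₂ := by rw [hpb.w]
      _ = p₂ ≫ m₂ ≫ c₂ := by rw [Category.assoc]
  obtain ⟨k, hd₁k, hd₂k⟩ : ∃ k : D ⟶ C₁, d₁ ≫ k = m₂ ≫ c₁ ∧ d₂ ≫ k = m₂ ≫ c₂ :=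
    ⟨hCP₂.desc _ _ wk, hCP₂.inl_desc _ _ _, hCP₂.inr_desc _ _ _⟩
  obtain ⟨hk⟩ : Nonempty (RegularMono k) :=
    regk_aux hm₂ hpb hCP₁ hst₁ hCP₂ hd₁k hd₂k hd₁dl hd₂dl hc₁dc hc₂dc
  -- the pushout Z of k along the codiagonal dl
  obtain ⟨Z, ζ, θ, sqZ, hstZ⟩ :
      ∃ (Z : C) (ζ : C₁ ⟶ Z) (θ : A₂ ⟶ Z) (H : IsPushout k dl ζ θ), IsStablePushout H := by
    haveI := hPO k dl hk
    exact ⟨_, _, _, IsPushout.of_hasPushout k dl,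
      (hSt k dl _ _ hk (IsPushout.of_hasPushout k dl)).1⟩
  have wρ : k ≫ dc = dl ≫ m₂ := by
    apply hCP₂.hom_ext
    · rw [← Category.assoc, hd₁k, ← Category.assoc, hd₁dl, Category.assoc, hc₁dc,
        Category.comp_id, Category.id_comp]
    · rw [← Category.assoc, hd₂k, ← Category.assoc, hd₂dl, Category.assoc, hc₂dc,
        Category.comp_id, Category.id_comp]
  obtain ⟨ρ, hζρ, hθρ⟩ : ∃ ρ : Z ⟶ X, ζ ≫ ρ = dc ∧ θ ≫ ρ = m₂ :=
    ⟨sqZ.desc dc m₂ wρ, sqZ.inl_desc _ _ _, sqZ.inr_desc _ _ _⟩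
  have hαρ : (c₁ ≫ ζ) ≫ ρ = 𝟙 X := by rw [Category.assoc, hζρ, hc₁dc]
  have hβρ : (c₂ ≫ ζ) ≫ ρ = 𝟙 X := by rw [Category.assoc, hζρ, hc₂dc]
  have hα : Mono (c₁ ≫ ζ) := ⟨fun {U} g h hy => by
    rw [← Category.comp_id g, ← hαρ, ← Category.assoc, hy, Category.assoc, hαρ,
      Category.comp_id]⟩
  have hθα : θ = m₂ ≫ c₁ ≫ ζ := by
    calc θ = (d₁ ≫ dl) ≫ θ := by rw [hd₁dl, Category.id_comp]
      _ = d₁ ≫ dl ≫ θ := by rw [Category.assoc]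
      _ = d₁ ≫ k ≫ ζ := by rw [← sqZ.w]
      _ = (d₁ ≫ k) ≫ ζ := by rw [Category.assoc]
      _ = (m₂ ≫ c₁) ≫ ζ := by rw [hd₁k]
      _ = m₂ ≫ c₁ ≫ ζ := by rw [Category.assoc]
  have hβθ : m₂ ≫ c₂ ≫ ζ = θ := by
    calc m₂ ≫ c₂ ≫ ζ = (m₂ ≫ c₂) ≫ ζ := by rw [Category.assoc]
      _ = (d₂ ≫ k) ≫ ζ := by rw [hd₂k]
      _ = d₂ ≫ k ≫ ζ := by rw [Category.assoc]
      _ = d₂ ≫ dl ≫ θ := by rw [sqZ.w]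
      _ = (d₂ ≫ dl) ≫ θ := by rw [Category.assoc]
      _ = θ := by rw [hd₂dl, Category.id_comp]
  have hmαβ : m ≫ c₁ ≫ ζ = m ≫ c₂ ≫ ζ := by
    apply hpo.hom_ext
    · calc q₁ ≫ m ≫ c₁ ≫ ζ = (q₁ ≫ m) ≫ c₁ ≫ ζ := by rw [Category.assoc]
        _ = m₁ ≫ c₁ ≫ ζ := by rw [hm₁']
        _ = (m₁ ≫ c₁) ≫ ζ := by rw [Category.assoc]
        _ = (m₁ ≫ c₂) ≫ ζ := by rw [hCP₁.w]
        _ = m₁ ≫ c₂ ≫ ζ := by rw [Category.assoc]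
        _ = (q₁ ≫ m) ≫ c₂ ≫ ζ := by rw [hm₁']
        _ = q₁ ≫ m ≫ c₂ ≫ ζ := by rw [Category.assoc]
    · calc q₂ ≫ m ≫ c₁ ≫ ζ = (q₂ ≫ m) ≫ c₁ ≫ ζ := by rw [Category.assoc]
        _ = m₂ ≫ c₁ ≫ ζ := by rw [hm₂']
        _ = θ := hθα.symm
        _ = m₂ ≫ c₂ ≫ ζ := hβθ.symm
        _ = (q₂ ≫ m) ≫ c₂ ≫ ζ := by rw [hm₂']
        _ = q₂ ≫ m ≫ c₂ ≫ ζ := by rw [Category.assoc]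
  -- the pullback I of the two maps X ⟶ Z
  obtain ⟨I, n, n2, hI⟩ : ∃ (I : C) (n : I ⟶ X) (n2 : I ⟶ X),
      IsPullback n n2 (c₁ ≫ ζ) (c₂ ≫ ζ) := ⟨_, _, _, IsPullback.of_hasPullback _ _⟩
  have hn2 : n2 = n := by
    calc n2 = (n2 ≫ c₂ ≫ ζ) ≫ ρ := by rw [Category.assoc, hβρ, Category.comp_id]
      _ = (n ≫ c₁ ≫ ζ) ≫ ρ := by rw [← hI.w]
      _ = n := by rw [Category.assoc, hαρ, Category.comp_id]
  have hnαβ : n ≫ c₁ ≫ ζ = n ≫ c₂ ≫ ζ := by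
    have := hI.w
    rwa [hn2] at this
  have hreg : RegularMono n :=
    { Z := Z
      left := c₁ ≫ ζ
      right := c₂ ≫ ζ
      w := hnαβ
      isLimit := by
        refine Fork.IsLimit.mk _ (fun s => hI.lift s.ι s.ι s.condition) (fun s => ?_)
          (fun s t ht => ?_)
        · simp only [Fork.ι_ofι]
          exact hI.lift_fst s.ι s.ι s.condition
        · apply hI.hom_ext
          · rw [hI.lift_fst]
            simpa using ht
          · rw [hI.lift_snd, hn2]
            simpa using ht }
  have hmono : Mono n := @RegularMono.mono _ _ _ _ n hreg
  refine ⟨I, hI.lift m m hmαβ, n, hI.lift_fst m m hmαβ, ?_, ⟨hreg⟩⟩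
  exact stableEpi_aux hCP₁ hst₁ hCP₂ hst₂ sqZ hstZ hd₁k hd₂k hd₁dl hd₂dl
    (hI.lift_fst m m hmαβ) hmono hα hm₁' hm₂' hθα hβθ hnαβ
end

section
/- In the category of reflexive 'antisymmetric-at-all-lengths' relations — sets X with a reflexive binary relation R such that for all n ≥ 2, x₁ R x₂ R ⋯ R xₙ R x₁ implies x₁ = x₂ = ⋯ = xₙ — the regular monomorphism given by the inclusion of ({0,2}, diagonal relation) into ({0,1,2}, S), where S is the diagonal together with 0 S 1 and 1 S 2, has a pushout along the map to the terminal object which is not a pullback square. Hence this category is not rm-quasiadhesive. -/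
open CategoryTheory Limits

universe v u

/-- A set with a reflexive binary relation which is "antisymmetric at all
lengths": every cycle `x₀ R x₁ R ⋯ R xₙ₋₁ R x₀` (of length `n ≥ 2`) is
constant. -/
structure ARel : Type 1 where
  α : Type
  r : α → α → Prop
  refl : ∀ x, r x x
  acyc : ∀ n : ℕ, 2 ≤ n → ∀ x : ℕ → α,
    (∀ i, i < n → r (x i) (x ((i + 1) % n))) →
    ∀ i j, i < n → j < n → x i = x j

/-- Relation-preserving functions make `ARel` into a category. -/
instance : Category ARel where
  Hom X Y := {f : X.α → Y.α // ∀ a b, X.r a b → Y.r (f a) (f b)}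
  id X := ⟨id, fun _ _ h => h⟩
  comp f g := ⟨g.1 ∘ f.1, fun a b h => g.2 _ _ (f.2 _ _ h)⟩


/-- Auxiliary: if a function to `ℕ` is injective and weakly increasing along a
cycle, then the cycle is constant. -/
private lemma cycle_const {α : Type} (f : α → ℕ) (hf : Function.Injective f)
    (n : ℕ) (hn : 2 ≤ n) (x : ℕ → α)
    (hx : ∀ i, i < n → f (x i) ≤ f (x ((i + 1) % n))) :
    ∀ i j, i < n → j < n → x i = x j := by
  have hn0 : 0 < n := by omega
  have key : ∀ k i, i < n → f (x i) ≤ f (x ((i + k) % n)) := by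
    intro k
    induction k with
    | zero => intro i hi; rw [Nat.add_zero, Nat.mod_eq_of_lt hi]
    | succ k ih =>
      intro i hi
      have h1 := ih i hi
      have h2 := hx ((i + k) % n) (Nat.mod_lt _ hn0)
      rw [Nat.mod_add_mod] at h2
      exact le_trans h1 h2
  intro i j hi hj
  have h1 : f (x i) ≤ f (x j) := by
    have := key (n - i + j) i hi
    rwa [show i + (n - i + j) = n + j by omega, Nat.add_mod_left,
      Nat.mod_eq_of_lt hj] at this
  have h2 : f (x j) ≤ f (x i) := by
    have := key (n - j + i) j hj
    rwa [show j + (n - j + i) = n + i by omega, Nat.add_mod_left,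
      Nat.mod_eq_of_lt hi] at this
  exact hf (Nat.le_antisymm h1 h2)

private def bval : Bool → ℕ := fun b => cond b 1 0

private lemma bval_inj : Function.Injective bval := by
  intro a b h
  cases a <;> cases b <;> simp [bval] at h ⊢

/-- `({0,2}`, represented by `Bool`, with the diagonal relation. -/
@[reducible] def Adiag : ARel :=
  ⟨Bool, Eq, fun _ => rfl, fun n hn x hx =>
    cycle_const bval bval_inj n hn x
      (fun i hi => le_of_eq (congrArg bval (hx i hi)))⟩

/-- The relation `S` on `{0,1,2}`: the diagonal together with `0 S 1`, `1 S 2`. -/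
def S3 : Fin 3 → Fin 3 → Prop := fun a b => a = b ∨ (a = 0 ∧ b = 1) ∨ (a = 1 ∧ b = 2)

/-- `({0,1,2}, S)`. -/
@[reducible] def BS : ARel :=
  ⟨Fin 3, S3, fun _ => Or.inl rfl, fun n hn x hx =>
    cycle_const Fin.val Fin.val_injective n hn x (fun i hi => by
      rcases hx i hi with h | ⟨h1, h2⟩ | ⟨h1, h2⟩
      · exact le_of_eq (congrArg Fin.val h)
      · rw [h1, h2]; decide
      · rw [h1, h2]; decide)⟩

/-- The terminal object: a point with the full relation. -/
@[reducible] def T1 : ARel :=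
  ⟨PUnit, fun _ _ => True, fun _ => trivial, fun _ _ _ _ _ _ _ _ => rfl⟩

/-- The inclusion of `({0,2}, diagonal)` into `({0,1,2}, S)`. -/
def ι : Adiag ⟶ BS :=
  ⟨fun b => if b then 2 else 0, fun a b h => h ▸ Or.inl rfl⟩

/-- The unique map from `Adiag` to the terminal object. -/
def tA : Adiag ⟶ T1 := ⟨fun _ => PUnit.unit, fun _ _ _ => trivial⟩

/-- The unique map from `BS` to the terminal object. -/
def tB : BS ⟶ T1 := ⟨fun _ => PUnit.unit, fun _ _ _ => trivial⟩

private lemma ARel.hom_ext {X Y : ARel} {f g : X ⟶ Y} (h : ∀ x, f.1 x = g.1 x) : f = g :=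
  Subtype.ext (funext h)

/-- The codomain used to exhibit `ι` as an equalizer. -/
@[reducible] private def CEq : ARel :=
  ⟨Fin 3 × Bool, fun p q => S3 p.1 q.1 ∧ (p.1 = q.1 → p.2 = q.2),
   fun p => ⟨Or.inl rfl, fun _ => rfl⟩,
   fun n hn x hx => by
     have h1 : ∀ i j, i < n → j < n → (x i).1 = (x j).1 :=
       BS.acyc n hn (fun i => (x i).1) (fun i hi => (hx i hi).1)
     have h2 : ∀ i j, i < n → j < n → (x i).2 = (x j).2 := by
       apply cycle_const bval bval_inj n hn (fun i => (x i).2)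
       intro i hi
       have := (hx i hi).2 (h1 i ((i+1) % n) hi (Nat.mod_lt _ (by omega)))
       exact le_of_eq (congrArg bval this)
     intro i j hi hj
     exact Prod.ext (h1 i j hi hj) (h2 i j hi hj)⟩

private def fEq : BS ⟶ CEq :=
  ⟨fun a => (a, false), fun a b h => ⟨h, fun _ => rfl⟩⟩

private def gEq : BS ⟶ CEq :=
  ⟨fun a => (a, decide (a = 1)), fun a b h => ⟨h, fun hab => by
    have hab' : a = b := hab
    show decide (a = 1) = decide (b = 1)
    rw [hab']⟩⟩

private lemma ι_ne_one : ∀ b : Bool, ι.1 b ≠ 1 := by decide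

private lemma ι_inj : Function.Injective ι.1 := by decide

private lemma ι_decide : ∀ a : Fin 3, a ≠ 1 → ι.1 (decide (a = 2)) = a := by decide

private lemma S3_diag : ∀ a b : Fin 3, a ≠ 1 → b ≠ 1 → S3 a b → a = b := by
  intro a b ha hb h
  rcases h with h | ⟨h1, _⟩ | ⟨h1, _⟩
  · exact h
  · exact absurd h1 (by intro e; exact hb (by omega))
  · exact absurd h1 ha

private lemma wEq : ι ≫ fEq = ι ≫ gEq := by
  apply ARel.hom_ext
  intro b
  cases b <;> rfl

/-- `ι` is a regular mono: it is the equalizer of `fEq` and `gEq`. -/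
noncomputable def ιRegular : RegularMono ι where
  Z := CEq
  left := fEq
  right := gEq
  w := wEq
  isLimit := Fork.IsLimit.mk' _ fun s => by
    let u : s.pt ⟶ BS := s.ι
    have hc : u ≫ fEq = u ≫ gEq := s.condition
    have hcond : ∀ z, u.1 z ≠ 1 := by
      intro z hz
      have := congrFun (congrArg Subtype.val hc) z
      have h2 : false = decide (u.1 z = 1) := congrArg Prod.snd this
      rw [hz] at h2
      simp at h2
    have key : ∀ z, ι.1 (decide (u.1 z = 2)) = u.1 z := fun z => ι_decide _ (hcond z)
    refine ⟨⟨fun z => decide (u.1 z = 2), fun a b h => ?_⟩, ?_, ?_⟩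
    · have := S3_diag _ _ (hcond a) (hcond b) (u.2 a b h)
      show decide (u.1 a = 2) = decide (u.1 b = 2)
      rw [this]
    · apply ARel.hom_ext
      intro z
      exact key z
    · intro m hm
      apply ARel.hom_ext
      intro z
      apply ι_inj
      have h1 := congrFun (congrArg Subtype.val hm) z
      exact h1.trans (key z).symm

/-- `T1` is terminal. -/
noncomputable def T1Terminal : IsTerminal T1 :=
  IsTerminal.ofUniqueHom (fun X => ⟨fun _ => PUnit.unit, fun _ _ _ => trivial⟩)
    (fun X m => ARel.hom_ext (fun _ => rfl))

private lemma mid_eq {W : ARel} (h : BS ⟶ W) (he : h.1 0 = h.1 2) :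
    h.1 1 = h.1 0 := by
  have r01 : W.r (h.1 0) (h.1 1) := h.2 0 1 (Or.inr (Or.inl ⟨rfl, rfl⟩))
  have r12 : W.r (h.1 1) (h.1 0) := by
    have := h.2 1 2 (Or.inr (Or.inr ⟨rfl, rfl⟩))
    rwa [← he] at this
  have key := W.acyc 2 le_rfl (fun i => if i % 2 = 0 then h.1 0 else h.1 1)
    (fun i hi => by
      interval_cases i
      · simpa using r01
      · simpa using r12) 1 0 (by omega) (by omega)
  simpa using key

/-- The square is a pushout. -/
theorem pushout_sq : IsPushout ι tA tB (𝟙 T1) := by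
  apply IsPushout.of_isColimit (c := PushoutCocone.mk tB (𝟙 T1)
    (by apply ARel.hom_ext; intro _; rfl))
  refine PushoutCocone.IsColimit.mk _ (fun s => s.inr) (fun s => ?_) (fun s => ?_)
    (fun s m hl hr => ?_)
  · apply ARel.hom_ext
    intro x
    have hcond : ∀ b : Bool, s.inl.1 (ι.1 b) = s.inr.1 PUnit.unit := by
      intro b
      exact congrFun (congrArg Subtype.val s.condition) b
    have h0 : s.inl.1 0 = s.inr.1 PUnit.unit := hcond false
    have h2 : s.inl.1 2 = s.inr.1 PUnit.unit := hcond true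
    have h1 : s.inl.1 1 = s.inl.1 0 := mid_eq s.inl (h0.trans h2.symm)
    show s.inr.1 PUnit.unit = s.inl.1 x
    fin_cases x
    · exact h0.symm
    · exact (h1.trans h0).symm
    · exact h2.symm
  · apply ARel.hom_ext
    intro x
    rfl
  · apply ARel.hom_ext
    intro x
    exact congrFun (congrArg Subtype.val hr) x

/-- The square is not a pullback. -/
theorem not_pullback_sq : ¬ IsPullback ι tA tB (𝟙 T1) := by
  intro h
  have w : (𝟙 BS) ≫ tB = tB ≫ 𝟙 T1 := by apply ARel.hom_ext; intro _; rfl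
  have hl := h.lift_fst (𝟙 BS) tB w
  have := congrFun (congrArg Subtype.val hl) 1
  exact ι_ne_one ((h.lift (𝟙 BS) tB w).1 1) this

/-- In the category of reflexive antisymmetric-at-all-lengths relations, the
regular monomorphism `ι` has a pushout along the map to the terminal object
which is not a pullback square; hence this category is not rm-quasiadhesive. -/
theorem aRel_not_rmQuasiadhesive :
    Nonempty (RegularMono ι) ∧ Nonempty (IsTerminal T1) ∧
    IsPushout ι tA tB (𝟙 T1) ∧ ¬ IsPullback ι tA tB (𝟙 T1) ∧
    ¬ RmQuasiadhesive ARel := by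
  refine ⟨⟨ιRegular⟩, ⟨T1Terminal⟩, pushout_sq, not_pullback_sq, ?_⟩
  intro ⟨_, h2⟩
  exact not_pullback_sq ((h2 ι tA tB (𝟙 T1) ιRegular pushout_sq).2)
end

section
/- A full subcategory of an adhesive category that is closed under pullbacks and under pushouts along monomorphisms is itself adhesive. -/
open CategoryTheory Limits

universe v u

namespace FullSubcategoryAdhesiveAux

variable {C : Type u} [Category.{v} C] [HasPullbacks C] [Adhesive C] {P : C → Prop}

/-- The inclusion creates limits of cospans, given closure under pullbacks. -/
noncomputable def createsCospan
    (hpb : ∀ {X Y Z : C} (f : X ⟶ Z) (g : Y ⟶ Z), P X → P Y → P Z → P (pullback f g))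
    {X Y Z : ObjectProperty.FullSubcategory P} (f : X ⟶ Z) (g : Y ⟶ Z) :
    CreatesLimit (cospan f g) (ObjectProperty.ι P) :=
  haveI : HasLimit (cospan f g ⋙ ObjectProperty.ι P) :=
    hasLimit_of_iso (cospanCompIso (ObjectProperty.ι P) f g).symm
  createsLimitOfFullyFaithfulOfIso
    (⟨pullback ((ObjectProperty.ι P).map f) ((ObjectProperty.ι P).map g),
      hpb _ _ X.2 Y.2 Z.2⟩ : ObjectProperty.FullSubcategory P)
    (HasLimit.isoOfNatIso (cospanCompIso (ObjectProperty.ι P) f g).symm)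

/-- The inclusion creates pushouts along monomorphisms, given closure under such pushouts. -/
noncomputable def createsSpan
    (hpo : ∀ {X Y Z : C} (f : Z ⟶ X) (g : Z ⟶ Y) [Mono f], P X → P Y → P Z → P (pushout f g))
    {X Y Z : ObjectProperty.FullSubcategory P} (f : Z ⟶ X) (g : Z ⟶ Y)
    [Mono ((ObjectProperty.ι P).map f)] :
    CreatesColimit (span f g) (ObjectProperty.ι P) :=
  haveI : HasColimit (span f g ⋙ ObjectProperty.ι P) :=
    hasColimit_of_iso (spanCompIso (ObjectProperty.ι P) f g)
  createsColimitOfFullyFaithfulOfIso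
    (⟨pushout ((ObjectProperty.ι P).map f) ((ObjectProperty.ι P).map g),
      hpo _ _ X.2 Y.2 Z.2⟩ : ObjectProperty.FullSubcategory P)
    (HasColimit.isoOfNatIso (spanCompIso (ObjectProperty.ι P) f g).symm)

end FullSubcategoryAdhesiveAux

open FullSubcategoryAdhesiveAux in
/-- A full subcategory of an adhesive category that is closed under pullbacks
and under pushouts along monomorphisms is itself adhesive. -/
theorem fullSubcategory_adhesive {C : Type u} [Category.{v} C] [HasPullbacks C]
    [Adhesive C] (P : C → Prop)
    (hpb : ∀ {X Y Z : C} (f : X ⟶ Z) (g : Y ⟶ Z),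
      P X → P Y → P Z → P (pullback f g))
    (hpo : ∀ {X Y Z : C} (f : Z ⟶ X) (g : Z ⟶ Y) [Mono f],
      P X → P Y → P Z → P (pushout f g)) :
    Adhesive (ObjectProperty.FullSubcategory P) := by
  set F := ObjectProperty.ι P with hFdef
  -- the inclusion preserves all pullbacks
  haveI crL : ∀ {X Y Z : ObjectProperty.FullSubcategory P} (f : X ⟶ Z) (g : Y ⟶ Z),
      CreatesLimit (cospan f g) F := fun f g => createsCospan @hpb f g
  haveI hasLimComp : ∀ {X Y Z : ObjectProperty.FullSubcategory P} (f : X ⟶ Z) (g : Y ⟶ Z),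
      HasLimit (cospan f g ⋙ F) := fun f g =>
    hasLimit_of_iso (cospanCompIso F f g).symm
  haveI presCospan : ∀ {X Y Z : ObjectProperty.FullSubcategory P} (f : X ⟶ Z) (g : Y ⟶ Z),
      PreservesLimit (cospan f g) F := fun f g =>
    preservesLimit_of_createsLimit_and_hasLimit _ _
  haveI presShape : PreservesLimitsOfShape WalkingCospan F :=
    ⟨fun {K} => preservesLimit_of_iso_diagram F (diagramIsoCospan K).symm⟩
  haveI hasPB : ∀ {X Y Z : ObjectProperty.FullSubcategory P} (f : X ⟶ Z) (g : Y ⟶ Z),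
      HasPullback f g := fun f g => hasLimit_of_created (cospan f g) F
  -- pushouts along monos in the subcategory
  haveI monoF : ∀ {X Y : ObjectProperty.FullSubcategory P} (f : X ⟶ Y) [Mono f], Mono (F.map f) := by
    intro X Y f _
    have h1 : IsPullback (𝟙 X) (𝟙 X) f f := IsKernelPair.id_of_mono f
    have h2 := h1.map F
    rw [F.map_id] at h2
    exact IsKernelPair.mono_of_isIso_fst h2
  haveI crC : ∀ {X Y Z : ObjectProperty.FullSubcategory P} (f : Z ⟶ X) (g : Z ⟶ Y) [Mono (F.map f)],
      CreatesColimit (span f g) F := fun f g _ => createsSpan @hpo f g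
  haveI hasColimComp : ∀ {X Y Z : ObjectProperty.FullSubcategory P} (f : Z ⟶ X) (g : Z ⟶ Y)
      [Mono (F.map f)], HasColimit (span f g ⋙ F) := fun f g _ =>
    hasColimit_of_iso (spanCompIso F f g)
  haveI presSpan : ∀ {X Y Z : ObjectProperty.FullSubcategory P} (f : Z ⟶ X) (g : Z ⟶ Y)
      [Mono (F.map f)], PreservesColimit (span f g) F := fun f g _ =>
    preservesColimit_of_createsColimit_and_hasColimit _ _
  haveI hasPO : ∀ {X Y Z : ObjectProperty.FullSubcategory P} (f : Z ⟶ X) (g : Z ⟶ Y) [Mono f],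
      HasPushout f g := fun f g _ => by
    haveI := monoF f
    exact hasColimit_of_created (span f g) F
  refine Adhesive.mk (hasPullback_of_mono_left := fun f g _ => hasPB f g)
    (hasPushout_of_mono_left := fun f g _ => hasPO f g) ?_
  intro W X Y Z f g h i _ H
  haveI := monoF f
  have H' : IsPushout (F.map f) (F.map g) (F.map h) (F.map i) := H.map F
  intro W' X' Y' Z' f' g' h' i' αW αX αY αZ hf hg hh hi w
  haveI : Mono (F.map f') :=
    PullbackCone.mono_fst_of_is_pullback_of_mono (hf.map F).isLimit
  calc IsPushout f' g' h' i'
      ↔ IsPushout (F.map f') (F.map g') (F.map h') (F.map i') :=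
        (IsPushout.map_iff F w.w).symm
    _ ↔ IsPullback (F.map h') (F.map αX) (F.map αZ) (F.map h) ∧
        IsPullback (F.map i') (F.map αY) (F.map αZ) (F.map i) :=
        Adhesive.van_kampen H' (F.map f') (F.map g') (F.map h') (F.map i')
          (F.map αW) (F.map αX) (F.map αY) (F.map αZ)
          (hf.map F) (hg.map F) (F.map_commSq hh) (F.map_commSq hi) (F.map_commSq w)
    _ ↔ IsPullback h' αX αZ h ∧ IsPullback i' αY αZ i :=
        and_congr (IsPullback.map_iff F hh.w) (IsPullback.map_iff F hi.w)
end

section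
/- In an adhesive category, binary unions of subobjects are effective: given subobjects h : A ⟶ E and p : B ⟶ E with intersection C (pullback, projections m : C ⟶ A, f : C ⟶ B), the pushout D of f along m exists and the induced morphism D ⟶ E is a monomorphism, exhibiting D as the union of A and B in the subobject lattice of E. -/
open CategoryTheory Limits

universe v u

variable {C : Type u} [Category.{v} C]

/-- Pulling back a pushout square along a morphism into its cocone point, in an
adhesive category, when the relevant legs are monomorphisms. -/
lemma pullback_pushout_decomp [Adhesive C] {P A B D T : C}
    {m : P ⟶ A} {f : P ⟶ B} {g : A ⟶ D} {n : B ⟶ D}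
    [Mono m] [Mono f] [Mono g] [Mono n]
    (hpo : IsPushout m f g n) (k : T ⟶ D) :
    ∃ (TP TA TB : C) (fA : TP ⟶ TA) (fB : TP ⟶ TB) (jA : TA ⟶ T) (jB : TB ⟶ T)
      (aA : TA ⟶ A) (aB : TB ⟶ B),
      IsPushout fA fB jA jB ∧ aA ≫ g = jA ≫ k ∧ aB ≫ n = jB ≫ k := by
  have vk := Adhesive.van_kampen hpo
  let TA := pullback g k
  let aA : TA ⟶ A := pullback.fst g k
  let jA : TA ⟶ T := pullback.snd g k
  have hTA : IsPullback jA aA k g := (IsPullback.of_hasPullback g k).flip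
  let TB := pullback n k
  let aB : TB ⟶ B := pullback.fst n k
  let jB : TB ⟶ T := pullback.snd n k
  have hTB : IsPullback jB aB k n := (IsPullback.of_hasPullback n k).flip
  haveI : Mono (m ≫ g) := mono_comp _ _
  let TP := pullback (m ≫ g) k
  let aP : TP ⟶ P := pullback.fst (m ≫ g) k
  let jP : TP ⟶ T := pullback.snd (m ≫ g) k
  have hTP : IsPullback aP jP (m ≫ g) k := IsPullback.of_hasPullback (m ≫ g) k
  have wA : (aP ≫ m) ≫ g = jP ≫ k := by rw [Category.assoc]; exact hTP.w
  have wB : (aP ≫ f) ≫ n = jP ≫ k := by rw [Category.assoc, ← hpo.w]; exact hTP.w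
  let fA : TP ⟶ TA := pullback.lift (aP ≫ m) jP wA
  let fB : TP ⟶ TB := pullback.lift (aP ≫ f) jP wB
  have fA_fst : fA ≫ aA = aP ≫ m := pullback.lift_fst _ _ _
  have fA_snd : fA ≫ jA = jP := pullback.lift_snd _ _ _
  have fB_fst : fB ≫ aB = aP ≫ f := pullback.lift_fst _ _ _
  have fB_snd : fB ≫ jB = jP := pullback.lift_snd _ _ _
  have rearA : IsPullback fA aP aA m := by
    apply IsPullback.of_right _ fA_fst hTA
    rw [fA_snd]; exact hTP.flip
  have rearB : IsPullback fB aP aB f := by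
    apply IsPullback.of_right _ fB_fst hTB
    rw [fB_snd, ← hpo.w]; exact hTP.flip
  have cs3 : CommSq fA fB jA jB := ⟨fA_snd.trans fB_snd.symm⟩
  have top : IsPushout fA fB jA jB :=
    (vk fA fB jA jB aP aA aB k rearA rearB hTA.toCommSq hTB.toCommSq cs3).mpr ⟨hTA, hTB⟩
  exact ⟨TP, TA, TB, fA, fB, jA, jB, aA, aB, top, hTA.w.symm, hTB.w.symm⟩

/-- In an adhesive category, binary unions of subobjects are effective: the
pushout over the intersection exists, the induced map to the ambient object is a
monomorphism, and it is the least subobject containing both. -/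
theorem effective_unions_adhesive [Adhesive C] {A B E P : C}
    (h : A ⟶ E) (p : B ⟶ E) [Mono h] [Mono p]
    (m : P ⟶ A) (f : P ⟶ B) (hpb : IsPullback m f h p) :
    HasPushout m f ∧
    ∀ {D : C} (g : A ⟶ D) (n : B ⟶ D) (x : D ⟶ E),
      IsPushout m f g n → g ≫ x = h → n ≫ x = p →
      Mono x ∧
      ∀ {W : C} (w : W ⟶ E), Mono w →
        (∃ t : A ⟶ W, t ≫ w = h) → (∃ s : B ⟶ W, s ≫ w = p) →
        ∃ u : D ⟶ W, u ≫ w = x := by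
  haveI hm : Mono m := PullbackCone.mono_fst_of_is_pullback_of_mono hpb.isLimit
  haveI hf : Mono f := PullbackCone.mono_snd_of_is_pullback_of_mono hpb.isLimit
  refine ⟨Adhesive.hasPushout_of_mono_left m f, ?_⟩
  intro D g n x hpo hgx hnx
  haveI : Mono n := Adhesive.mono_of_isPushout_of_mono_left hpo
  haveI : Mono g := Adhesive.mono_of_isPushout_of_mono_right hpo
  constructor
  · -- x is a monomorphism
    constructor
    intro T a b hab
    obtain ⟨TP, TA, TB, fA, fB, jA, jB, aA, aB, top, hA, hB⟩ :=
      pullback_pushout_decomp hpo a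
    apply top.hom_ext
    · -- restrict to TA, then decompose along (jA ≫ b)
      obtain ⟨SP, SA, SB, eA, eB, iA, iB, cA, cB, top2, h2A, h2B⟩ :=
        pullback_pushout_decomp hpo (jA ≫ b)
      apply top2.hom_ext
      · -- On SA: two maps to A agreeing after h
        have e1 : (iA ≫ aA) ≫ h = cA ≫ h := by
          rw [← hgx]; simp only [Category.assoc]
          rw [reassoc_of% hA, reassoc_of% h2A, hab]
        have e2 : iA ≫ aA = cA := (cancel_mono h).mp e1
        calc iA ≫ jA ≫ a = iA ≫ aA ≫ g := by rw [← hA]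
          _ = cA ≫ g := by rw [← Category.assoc, e2]
          _ = iA ≫ jA ≫ b := h2A
      · -- On SB: map to A (a-side) and map to B (b-side), lift to P
        have e1 : (iB ≫ aA) ≫ h = cB ≫ p := by
          rw [← hgx, ← hnx]; simp only [Category.assoc]
          rw [reassoc_of% hA, reassoc_of% h2B, hab]
        have w1 : hpb.lift (iB ≫ aA) cB e1 ≫ m = iB ≫ aA := hpb.lift_fst _ _ _
        have w2 : hpb.lift (iB ≫ aA) cB e1 ≫ f = cB := hpb.lift_snd _ _ _
        calc iB ≫ jA ≫ a = iB ≫ aA ≫ g := by rw [← hA]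
          _ = (hpb.lift (iB ≫ aA) cB e1 ≫ m) ≫ g := by rw [w1, Category.assoc]
          _ = (hpb.lift (iB ≫ aA) cB e1 ≫ f) ≫ n := by
              rw [Category.assoc, Category.assoc, hpo.w]
          _ = cB ≫ n := by rw [w2]
          _ = iB ≫ jA ≫ b := h2B
    · -- restrict to TB, then decompose along (jB ≫ b)
      obtain ⟨SP, SA, SB, eA, eB, iA, iB, cA, cB, top2, h2A, h2B⟩ :=
        pullback_pushout_decomp hpo (jB ≫ b)
      apply top2.hom_ext
      · -- On SA: map to B (a-side) and map to A (b-side), lift to P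
        have e1 : cA ≫ h = (iA ≫ aB) ≫ p := by
          rw [← hgx, ← hnx]; simp only [Category.assoc]
          rw [reassoc_of% hB, hab, reassoc_of% h2A]
        have w1 : hpb.lift cA (iA ≫ aB) e1 ≫ m = cA := hpb.lift_fst _ _ _
        have w2 : hpb.lift cA (iA ≫ aB) e1 ≫ f = iA ≫ aB := hpb.lift_snd _ _ _
        calc iA ≫ jB ≫ a = iA ≫ aB ≫ n := by rw [← hB]
          _ = (hpb.lift cA (iA ≫ aB) e1 ≫ f) ≫ n := by rw [w2, Category.assoc]
          _ = (hpb.lift cA (iA ≫ aB) e1 ≫ m) ≫ g := by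
              rw [Category.assoc, Category.assoc, hpo.w]
          _ = cA ≫ g := by rw [w1]
          _ = iA ≫ jB ≫ b := h2A
      · -- On SB: two maps to B agreeing after p
        have e1 : (iB ≫ aB) ≫ p = cB ≫ p := by
          rw [← hnx]; simp only [Category.assoc]
          rw [reassoc_of% hB, reassoc_of% h2B, hab]
        have e2 : iB ≫ aB = cB := (cancel_mono p).mp e1
        calc iB ≫ jB ≫ a = iB ≫ aB ≫ n := by rw [← hB]
          _ = cB ≫ n := by rw [← Category.assoc, e2]
          _ = iB ≫ jB ≫ b := h2B
  · -- least upper bound property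
    intro W w hw ⟨t, ht⟩ ⟨s, hs⟩
    have hts : m ≫ t = f ≫ s := by
      apply (cancel_mono w).mp
      rw [Category.assoc, Category.assoc, ht, hs, hpb.w]
    refine ⟨hpo.desc t s hts, ?_⟩
    apply hpo.hom_ext
    · rw [← Category.assoc, hpo.inl_desc, ht, hgx]
    · rw [← Category.assoc, hpo.inr_desc, hs, hnx]
end
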